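/- arXiv:1810.11355 — 2 statements merged into one kernel-verified Lean document; each statement's English description precedes it below -/
import Mathlib

section
/- Generalized admissibility of multiple simultaneous replacement in G3c₁^=⁻: let A be an atomic formula, let u₁, …, uₙ, v be pairwise distinct variables each occurring exactly once in A, let q₁, …, qₙ, p₁, …, pₙ, s, r be terms in which none of the variables u₁, …, uₙ, v occurs, and let Γ, Δ be finite multisets of formulas. If the sequent q₁ = p₁, …, qₙ = pₙ, s = r, A[u⃗/q⃗, v/s], A[u⃗/p⃗, v/r], Γ ⇒ Δ is derivable in G3c₁^=⁻, then the sequent q₁ = p₁, …, qₙ = pₙ, s = r, A[u⃗/q⃗, v/s], Γ ⇒ Δ is derivable in G3c₁^=⁻. -/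
open FirstOrder Language Multiset

universe u v

variable {L : FirstOrder.Language.{u, v}}

/-- Number of occurrences of the variable `v` in a term. -/
def tCount (v : ℕ) : L.Term ℕ → ℕ
  | .var w => if w = v then 1 else 0
  | .func _ ts => Finset.univ.sum fun i => tCount v (ts i)

/-- First-order formulas over the language `L` (with built-in equality),
with natural numbers as variables. -/
inductive Fm (L : FirstOrder.Language.{u, v}) : Type (max u v) where
  | falsum : Fm L
  | equal : L.Term ℕ → L.Term ℕ → Fm L
  | rel {l : ℕ} : L.Relations l → (Fin l → L.Term ℕ) → Fm L
  | and : Fm L → Fm L → Fm L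
  | or : Fm L → Fm L → Fm L
  | imp : Fm L → Fm L → Fm L
  | all : ℕ → Fm L → Fm L
  | ex : ℕ → Fm L → Fm L

namespace Fm

/-- Atomic formulas: equalities and relational atoms. -/
inductive IsAtomic : Fm L → Prop where
  | equal (t₁ t₂ : L.Term ℕ) : (Fm.equal t₁ t₂).IsAtomic
  | rel {l : ℕ} (R : L.Relations l) (ts : Fin l → L.Term ℕ) : (Fm.rel R ts).IsAtomic

/-- Number of free occurrences of the variable `v` in a formula. -/
def fCount (v : ℕ) : Fm L → ℕ
  | falsum => 0
  | equal t₁ t₂ => tCount v t₁ + tCount v t₂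
  | rel _ ts => Finset.univ.sum fun i => tCount v (ts i)
  | and A B => fCount v A + fCount v B
  | or A B => fCount v A + fCount v B
  | imp A B => fCount v A + fCount v B
  | all y A => if y = v then 0 else fCount v A
  | ex y A => if y = v then 0 else fCount v A

/-- The set of free variables of a formula. -/
def freeVars : Fm L → Set ℕ
  | falsum => ∅
  | equal t₁ t₂ => {w | tCount w t₁ ≠ 0 ∨ tCount w t₂ ≠ 0}
  | rel _ ts => {w | ∃ i, tCount w (ts i) ≠ 0}
  | and A B => A.freeVars ∪ B.freeVars
  | or A B => A.freeVars ∪ B.freeVars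
  | imp A B => A.freeVars ∪ B.freeVars
  | all y A => A.freeVars \ {y}
  | ex y A => A.freeVars \ {y}

/-- Simultaneous substitution of terms for the free variables of a formula. -/
def ssub (σ : ℕ → L.Term ℕ) : Fm L → Fm L
  | falsum => falsum
  | equal t₁ t₂ => equal (t₁.subst σ) (t₂.subst σ)
  | rel R ts => rel R fun i => (ts i).subst σ
  | and A B => and (A.ssub σ) (B.ssub σ)
  | or A B => or (A.ssub σ) (B.ssub σ)
  | imp A B => imp (A.ssub σ) (B.ssub σ)
  | all y A => all y (A.ssub (Function.update σ y (Term.var y)))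
  | ex y A => ex y (A.ssub (Function.update σ y (Term.var y)))

/-- `A.subst v t` is `A[v/t]`, the substitution of the term `t`
for the variable `v` in `A`. -/
def subst (v : ℕ) (t : L.Term ℕ) (A : Fm L) : Fm L :=
  A.ssub (Function.update (Term.var : ℕ → L.Term ℕ) v t)

/-- `t` is free for `x` in `A` (no free occurrence of `x` lies in the scope of a
quantifier binding a variable of `t`). -/
def freeFor (t : L.Term ℕ) (x : ℕ) : Fm L → Prop
  | falsum => True
  | equal _ _ => True
  | rel _ _ => True
  | and A B => freeFor t x A ∧ freeFor t x B
  | or A B => freeFor t x A ∧ freeFor t x B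
  | imp A B => freeFor t x A ∧ freeFor t x B
  | all y A => x = y ∨ x ∉ A.freeVars ∨ (tCount y t = 0 ∧ freeFor t x A)
  | ex y A => x = y ∨ x ∉ A.freeVars ∨ (tCount y t = 0 ∧ freeFor t x A)

end Fm

/-- The rule Repl, given as the relation between the antecedent of the premiss and the
antecedent of the conclusion (the succedent is unchanged): from
`s = r, P[v/s], P[v/r], Γ ⇒ Δ` infer `s = r, P[v/s], Γ ⇒ Δ`, for `P` atomic and
`v` not occurring in `s, r`. -/
def ReplFull (L : FirstOrder.Language.{u, v}) : Multiset (Fm L) → Multiset (Fm L) → Prop := fun Γp Γc =>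
  ∃ (s r : L.Term ℕ) (v : ℕ) (P : Fm L) (Γ : Multiset (Fm L)),
    P.IsAtomic ∧ tCount v s = 0 ∧ tCount v r = 0 ∧
    Γp = Fm.equal s r ::ₘ P.subst v s ::ₘ P.subst v r ::ₘ Γ ∧
    Γc = Fm.equal s r ::ₘ P.subst v s ::ₘ Γ

/-- The rule Repl⁻: from `s = r, P[v/r], Γ ⇒ Δ` infer `s = r, P[v/s], Γ ⇒ Δ`,
for `P` atomic and `v` not occurring in `s, r`. -/
def ReplMinus (L : FirstOrder.Language.{u, v}) : Multiset (Fm L) → Multiset (Fm L) → Prop := fun Γp Γc =>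
  ∃ (s r : L.Term ℕ) (v : ℕ) (P : Fm L) (Γ : Multiset (Fm L)),
    P.IsAtomic ∧ tCount v s = 0 ∧ tCount v r = 0 ∧
    Γp = Fm.equal s r ::ₘ P.subst v r ::ₘ Γ ∧
    Γc = Fm.equal s r ::ₘ P.subst v s ::ₘ Γ

/-- The rule Repl₁⁻: Repl⁻ restricted to atomic `P` with exactly one occurrence of `v`. -/
def ReplMinus1 (L : FirstOrder.Language.{u, v}) : Multiset (Fm L) → Multiset (Fm L) → Prop := fun Γp Γc =>
  ∃ (s r : L.Term ℕ) (v : ℕ) (P : Fm L) (Γ : Multiset (Fm L)),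
    P.IsAtomic ∧ tCount v s = 0 ∧ tCount v r = 0 ∧ Fm.fCount v P = 1 ∧
    Γp = Fm.equal s r ::ₘ P.subst v r ::ₘ Γ ∧
    Γc = Fm.equal s r ::ₘ P.subst v s ::ₘ Γ

/-- `DerC rp n Γ Δ`: the sequent `Γ ⇒ Δ` has a derivation of height at most `n` in the
classical multisuccedent G3 calculus `G3c` with the equality rule Ref and the
replacement rule given by `rp` (e.g. `ReplFull L` for `G3c^=`, `ReplMinus L` for `G3c^=⁻`,
`ReplMinus1 L` for `G3c₁^=⁻`). -/
inductive DerC (rp : Multiset (Fm L) → Multiset (Fm L) → Prop) :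
    ℕ → Multiset (Fm L) → Multiset (Fm L) → Prop where
  | ax {n : ℕ} {Γ Δ : Multiset (Fm L)} {P : Fm L} (hP : P.IsAtomic) :
      DerC rp n (P ::ₘ Γ) (P ::ₘ Δ)
  | botL {n : ℕ} {Γ Δ : Multiset (Fm L)} : DerC rp n (Fm.falsum ::ₘ Γ) Δ
  | andL {n : ℕ} {Γ Δ : Multiset (Fm L)} {A B : Fm L} :
      DerC rp n (A ::ₘ B ::ₘ Γ) Δ → DerC rp (n + 1) (Fm.and A B ::ₘ Γ) Δ
  | andR {n : ℕ} {Γ Δ : Multiset (Fm L)} {A B : Fm L} :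
      DerC rp n Γ (A ::ₘ Δ) → DerC rp n Γ (B ::ₘ Δ) → DerC rp (n + 1) Γ (Fm.and A B ::ₘ Δ)
  | orL {n : ℕ} {Γ Δ : Multiset (Fm L)} {A B : Fm L} :
      DerC rp n (A ::ₘ Γ) Δ → DerC rp n (B ::ₘ Γ) Δ → DerC rp (n + 1) (Fm.or A B ::ₘ Γ) Δ
  | orR {n : ℕ} {Γ Δ : Multiset (Fm L)} {A B : Fm L} :
      DerC rp n Γ (A ::ₘ B ::ₘ Δ) → DerC rp (n + 1) Γ (Fm.or A B ::ₘ Δ)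
  | impL {n : ℕ} {Γ Δ : Multiset (Fm L)} {A B : Fm L} :
      DerC rp n Γ (A ::ₘ Δ) → DerC rp n (B ::ₘ Γ) Δ → DerC rp (n + 1) (Fm.imp A B ::ₘ Γ) Δ
  | impR {n : ℕ} {Γ Δ : Multiset (Fm L)} {A B : Fm L} :
      DerC rp n (A ::ₘ Γ) (B ::ₘ Δ) → DerC rp (n + 1) Γ (Fm.imp A B ::ₘ Δ)
  | allL {n : ℕ} {Γ Δ : Multiset (Fm L)} {x : ℕ} {t : L.Term ℕ} {A : Fm L}
      (hf : Fm.freeFor t x A) :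
      DerC rp n (A.subst x t ::ₘ Fm.all x A ::ₘ Γ) Δ → DerC rp (n + 1) (Fm.all x A ::ₘ Γ) Δ
  | allR {n : ℕ} {Γ Δ : Multiset (Fm L)} {x y : ℕ} {A : Fm L}
      (hf : Fm.freeFor (Term.var y) x A) (hy : y ∉ (Fm.all x A).freeVars)
      (hΓ : ∀ C ∈ Γ, y ∉ Fm.freeVars C) (hΔ : ∀ C ∈ Δ, y ∉ Fm.freeVars C) :
      DerC rp n Γ (A.subst x (Term.var y) ::ₘ Δ) → DerC rp (n + 1) Γ (Fm.all x A ::ₘ Δ)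
  | exL {n : ℕ} {Γ Δ : Multiset (Fm L)} {x y : ℕ} {A : Fm L}
      (hf : Fm.freeFor (Term.var y) x A) (hy : y ∉ (Fm.ex x A).freeVars)
      (hΓ : ∀ C ∈ Γ, y ∉ Fm.freeVars C) (hΔ : ∀ C ∈ Δ, y ∉ Fm.freeVars C) :
      DerC rp n (A.subst x (Term.var y) ::ₘ Γ) Δ → DerC rp (n + 1) (Fm.ex x A ::ₘ Γ) Δ
  | exR {n : ℕ} {Γ Δ : Multiset (Fm L)} {x : ℕ} {t : L.Term ℕ} {A : Fm L}
      (hf : Fm.freeFor t x A) :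
      DerC rp n Γ (A.subst x t ::ₘ Fm.ex x A ::ₘ Δ) → DerC rp (n + 1) Γ (Fm.ex x A ::ₘ Δ)
  | ref {n : ℕ} {Γ Δ : Multiset (Fm L)} (t : L.Term ℕ) :
      DerC rp n (Fm.equal t t ::ₘ Γ) Δ → DerC rp (n + 1) Γ Δ
  | repl {n : ℕ} {Γp Γc Δ : Multiset (Fm L)} (h : rp Γp Γc) :
      DerC rp n Γp Δ → DerC rp (n + 1) Γc Δ

/-- `DerI rp n Γ Δ`: the sequent `Γ ⇒ Δ` has a derivation of height at most `n` in the
intuitionistic multisuccedent G3 calculus (the right rules for `→` and `∀` have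
single-succedent premisses, and L→ repeats its principal formula) with the equality rule
Ref and the replacement rule given by `rp`. -/
inductive DerI (rp : Multiset (Fm L) → Multiset (Fm L) → Prop) :
    ℕ → Multiset (Fm L) → Multiset (Fm L) → Prop where
  | ax {n : ℕ} {Γ Δ : Multiset (Fm L)} {P : Fm L} (hP : P.IsAtomic) :
      DerI rp n (P ::ₘ Γ) (P ::ₘ Δ)
  | botL {n : ℕ} {Γ Δ : Multiset (Fm L)} : DerI rp n (Fm.falsum ::ₘ Γ) Δ
  | andL {n : ℕ} {Γ Δ : Multiset (Fm L)} {A B : Fm L} :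
      DerI rp n (A ::ₘ B ::ₘ Γ) Δ → DerI rp (n + 1) (Fm.and A B ::ₘ Γ) Δ
  | andR {n : ℕ} {Γ Δ : Multiset (Fm L)} {A B : Fm L} :
      DerI rp n Γ (A ::ₘ Δ) → DerI rp n Γ (B ::ₘ Δ) → DerI rp (n + 1) Γ (Fm.and A B ::ₘ Δ)
  | orL {n : ℕ} {Γ Δ : Multiset (Fm L)} {A B : Fm L} :
      DerI rp n (A ::ₘ Γ) Δ → DerI rp n (B ::ₘ Γ) Δ → DerI rp (n + 1) (Fm.or A B ::ₘ Γ) Δ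
  | orR {n : ℕ} {Γ Δ : Multiset (Fm L)} {A B : Fm L} :
      DerI rp n Γ (A ::ₘ B ::ₘ Δ) → DerI rp (n + 1) Γ (Fm.or A B ::ₘ Δ)
  | impL {n : ℕ} {Γ Δ : Multiset (Fm L)} {A B : Fm L} :
      DerI rp n (Fm.imp A B ::ₘ Γ) (A ::ₘ Δ) → DerI rp n (B ::ₘ Γ) Δ →
      DerI rp (n + 1) (Fm.imp A B ::ₘ Γ) Δ
  | impR {n : ℕ} {Γ Δ : Multiset (Fm L)} {A B : Fm L} :
      DerI rp n (A ::ₘ Γ) {B} → DerI rp (n + 1) Γ (Fm.imp A B ::ₘ Δ)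
  | allL {n : ℕ} {Γ Δ : Multiset (Fm L)} {x : ℕ} {t : L.Term ℕ} {A : Fm L}
      (hf : Fm.freeFor t x A) :
      DerI rp n (A.subst x t ::ₘ Fm.all x A ::ₘ Γ) Δ → DerI rp (n + 1) (Fm.all x A ::ₘ Γ) Δ
  | allR {n : ℕ} {Γ Δ : Multiset (Fm L)} {x y : ℕ} {A : Fm L}
      (hf : Fm.freeFor (Term.var y) x A) (hy : y ∉ (Fm.all x A).freeVars)
      (hΓ : ∀ C ∈ Γ, y ∉ Fm.freeVars C) :
      DerI rp n Γ {A.subst x (Term.var y)} → DerI rp (n + 1) Γ (Fm.all x A ::ₘ Δ)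
  | exL {n : ℕ} {Γ Δ : Multiset (Fm L)} {x y : ℕ} {A : Fm L}
      (hf : Fm.freeFor (Term.var y) x A) (hy : y ∉ (Fm.ex x A).freeVars)
      (hΓ : ∀ C ∈ Γ, y ∉ Fm.freeVars C) (hΔ : ∀ C ∈ Δ, y ∉ Fm.freeVars C) :
      DerI rp n (A.subst x (Term.var y) ::ₘ Γ) Δ → DerI rp (n + 1) (Fm.ex x A ::ₘ Γ) Δ
  | exR {n : ℕ} {Γ Δ : Multiset (Fm L)} {x : ℕ} {t : L.Term ℕ} {A : Fm L}
      (hf : Fm.freeFor t x A) :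
      DerI rp n Γ (A.subst x t ::ₘ Fm.ex x A ::ₘ Δ) → DerI rp (n + 1) Γ (Fm.ex x A ::ₘ Δ)
  | ref {n : ℕ} {Γ Δ : Multiset (Fm L)} (t : L.Term ℕ) :
      DerI rp n (Fm.equal t t ::ₘ Γ) Δ → DerI rp (n + 1) Γ Δ
  | repl {n : ℕ} {Γp Γc Δ : Multiset (Fm L)} (h : rp Γp Γc) :
      DerI rp n Γp Δ → DerI rp (n + 1) Γc Δ


/- ===================== Auxiliary development ===================== -/

namespace ReplAux

open Fm

variable {L : FirstOrder.Language.{u, v}}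

/-- substitution only depends on occurring variables -/
theorem tsubst_congr {t : L.Term ℕ} {σ σ' : ℕ → L.Term ℕ}
    (h : ∀ z, tCount z t ≠ 0 → σ z = σ' z) : t.subst σ = t.subst σ' := by
  induction t with
  | var z => exact h z (by simp [tCount])
  | func f ts ih =>
      simp only [Term.subst]
      congr 1
      funext i
      refine ih i fun z hz => h z ?_
      simp only [tCount]
      intro h0
      exact hz (Finset.sum_eq_zero_iff.mp h0 i (Finset.mem_univ i))

theorem tsubst_var (t : L.Term ℕ) : t.subst Term.var = t := by
  induction t with
  | var z => rfl
  | func f ts ih => simp only [Term.subst]; congr 1; funext i; exact ih i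

theorem tsubst_id {t : L.Term ℕ} {w : ℕ} {x : L.Term ℕ} (h : tCount w t = 0) :
    t.subst (Function.update Term.var w x) = t := by
  rw [tsubst_congr (σ' := Term.var), tsubst_var]
  intro z hz
  have : z ≠ w := by rintro rfl; exact hz h
  simp [Function.update_of_ne this]

theorem tsubst_comp (t : L.Term ℕ) (σ σ' : ℕ → L.Term ℕ) :
    (t.subst σ).subst σ' = t.subst fun z => (σ z).subst σ' := by
  induction t with
  | var z => rfl
  | func f ts ih => simp only [Term.subst]; congr 1; funext i; exact ih i

/-- counting occurrences after substitution -/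
theorem tcount_subst_update {y w : ℕ} (hyw : y ≠ w) (x : L.Term ℕ) (t : L.Term ℕ) :
    tCount y (t.subst (Function.update Term.var w x)) =
      tCount y t + tCount w t * tCount y x := by
  induction t with
  | var z =>
      by_cases hz : z = w
      · subst hz
        simp [tCount, Function.update_self, Ne.symm hyw]
      · simp only [Term.subst, Function.update_of_ne hz, tCount]
        by_cases hzy : z = y <;> simp [tCount, hzy, hz] <;>
          exact fun h => absurd h hyw
  | func f ts ih =>
      simp only [Term.subst, tCount]
      rw [Finset.sum_congr rfl fun i _ => ih i, Finset.sum_add_distrib, Finset.sum_mul]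

theorem tcount_subst_zero {w : ℕ} {t : L.Term ℕ} {ρ : ℕ → L.Term ℕ}
    (h : ∀ z, tCount z t ≠ 0 → tCount w (ρ z) = 0) : tCount w (t.subst ρ) = 0 := by
  induction t with
  | var z => exact h z (by simp [tCount])
  | func f ts ih =>
      simp only [Term.subst, tCount]
      refine Finset.sum_eq_zero fun i _ => ih i fun z hz => h z ?_
      simp only [tCount]
      intro h0
      exact hz (Finset.sum_eq_zero_iff.mp h0 i (Finset.mem_univ i))

/-- occurrences of `w` in `t.subst ρ` bound occurrences coming from `ρ z` -/
theorem tcount_subst_mem {w z : ℕ} {t : L.Term ℕ} {ρ : ℕ → L.Term ℕ}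
    (hz : tCount z t ≠ 0) (h : tCount w (t.subst ρ) = 0) : tCount w (ρ z) = 0 := by
  induction t with
  | var z' =>
      have : z' = z := by by_contra hne; simp [tCount, hne] at hz
      subst this; exact h
  | func f ts ih =>
      simp only [tCount] at hz
      simp only [Term.subst, tCount] at h
      obtain ⟨i, -, hi⟩ := Finset.exists_ne_zero_of_sum_ne_zero hz
      exact ih i hi (Finset.sum_eq_zero_iff.mp h i (Finset.mem_univ i))

theorem tcount_subst_marker {w z : ℕ} {t : L.Term ℕ} {ρ : ℕ → L.Term ℕ}
    (h : ∀ z', tCount z' t ≠ 0 → z' ≠ z → tCount w (ρ z') = 0) :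
    tCount w (t.subst (Function.update ρ z (Term.var w))) = tCount z t := by
  induction t with
  | var z' =>
      by_cases hz : z' = z
      · subst hz; simp [tCount, Function.update_self]
      · simp only [Term.subst, Function.update_of_ne hz]
        rw [h z' (by simp [tCount]) hz]
        simp [tCount, hz]
  | func f ts ih =>
      simp only [Term.subst, tCount]
      refine Finset.sum_congr rfl fun i _ => ih i fun z' hz' hne => h z' ?_ hne
      simp only [tCount]
      intro h0
      exact hz' (Finset.sum_eq_zero_iff.mp h0 i (Finset.mem_univ i))

theorem tsubst_update_comp {t : L.Term ℕ} {ρ : ℕ → L.Term ℕ} {z w : ℕ} {x : L.Term ℕ}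
    (h : ∀ z', tCount z' t ≠ 0 → z' ≠ z → tCount w (ρ z') = 0) :
    (t.subst (Function.update ρ z (Term.var w))).subst (Function.update Term.var w x) =
      t.subst (Function.update ρ z x) := by
  rw [tsubst_comp]
  refine tsubst_congr fun z' hz' => ?_
  by_cases hz : z' = z
  · subst hz; simp [Function.update_self]
  · rw [Function.update_of_ne hz, Function.update_of_ne hz, tsubst_id (h z' hz' hz)]

/-- maximal variable occurring in a term -/
def maxVarT : L.Term ℕ → ℕ
  | .var w => w
  | .func _ ts => Finset.univ.sup fun i => maxVarT (ts i)

theorem tcount_eq_zero_of_gt {w : ℕ} {t : L.Term ℕ} (h : maxVarT t < w) : tCount w t = 0 := by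
  induction t with
  | var z =>
      simp only [maxVarT] at h
      simp [tCount, Nat.ne_of_lt h]
  | func f ts ih =>
      simp only [tCount]
      refine Finset.sum_eq_zero fun i _ => ih i (lt_of_le_of_lt ?_ h)
      exact Finset.le_sup (f := fun i => maxVarT (ts i)) (Finset.mem_univ i)

end ReplAux

namespace ReplAux

open Fm

variable {L : FirstOrder.Language.{u, v}}

/-- `P.subst w x` computed on atomic formulas -/
theorem subst_equal (t₁ t₂ : L.Term ℕ) (w : ℕ) (x : L.Term ℕ) :
    (Fm.equal t₁ t₂).subst w x =
      Fm.equal (t₁.subst (Function.update Term.var w x)) (t₂.subst (Function.update Term.var w x)) := rfl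

theorem subst_rel {l : ℕ} (R : L.Relations l) (ts : Fin l → L.Term ℕ) (w : ℕ) (x : L.Term ℕ) :
    (Fm.rel R ts).subst w x = Fm.rel R fun i => (ts i).subst (Function.update Term.var w x) := rfl

theorem isAtomic_subst {P : Fm L} (h : P.IsAtomic) (w : ℕ) (x : L.Term ℕ) :
    (P.subst w x).IsAtomic := by
  cases h with
  | equal t₁ t₂ => exact .equal _ _
  | rel R ts => exact .rel _ _

/-- maximal variable of an atomic formula -/
def maxVarF : Fm L → ℕ
  | .equal t₁ t₂ => max (maxVarT t₁) (maxVarT t₂)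
  | .rel _ ts => Finset.univ.sup fun i => maxVarT (ts i)
  | _ => 0

theorem fcount_eq_zero_of_gt {w : ℕ} {P : Fm L} (hP : P.IsAtomic) (h : maxVarF P < w) :
    Fm.fCount w P = 0 := by
  cases hP with
  | equal t₁ t₂ =>
      simp only [maxVarF, max_lt_iff] at h
      simp [Fm.fCount, tcount_eq_zero_of_gt h.1, tcount_eq_zero_of_gt h.2]
  | rel R ts =>
      simp only [maxVarF] at h
      simp only [Fm.fCount]
      refine Finset.sum_eq_zero fun i _ => tcount_eq_zero_of_gt (lt_of_le_of_lt ?_ h)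
      exact Finset.le_sup (f := fun i => maxVarT (ts i)) (Finset.mem_univ i)

theorem targ_count_zero_of_gt {w : ℕ} {t : L.Term ℕ} (h : maxVarT t < w) : tCount w t = 0 :=
  tcount_eq_zero_of_gt h

/-- equational consequence of the equalities in a multiset of formulas -/
inductive TmEq (E : Multiset (Fm L)) : L.Term ℕ → L.Term ℕ → Prop
  | base {a b : L.Term ℕ} : Fm.equal a b ∈ E → TmEq E a b
  | refl (a : L.Term ℕ) : TmEq E a a
  | symm {a b : L.Term ℕ} : TmEq E a b → TmEq E b a
  | trans {a b c : L.Term ℕ} : TmEq E a b → TmEq E b c → TmEq E a c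
  | congr {x y : L.Term ℕ} {c : L.Term ℕ} {w : ℕ} : TmEq E x y → tCount w c = 1 →
      TmEq E (c.subst (Function.update Term.var w x)) (c.subst (Function.update Term.var w y))

theorem tmEq_mono {E E' : Multiset (Fm L)} (hE : ∀ a b : L.Term ℕ, Fm.equal a b ∈ E → Fm.equal a b ∈ E')
    {a b : L.Term ℕ} (h : TmEq E a b) : TmEq E' a b := by
  induction h with
  | base h => exact .base (hE _ _ h)
  | refl a => exact .refl a
  | symm _ ih => exact ih.symm
  | trans _ _ ih₁ ih₂ => exact ih₁.trans ih₂
  | congr _ hc ih => exact ih.congr hc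

/-- componentwise equational relation between atomic formulas -/
def CompEq (E : Multiset (Fm L)) (X Y : Fm L) : Prop :=
  (∃ t₁ t₂ t₁' t₂' : L.Term ℕ, X = Fm.equal t₁ t₂ ∧ Y = Fm.equal t₁' t₂' ∧
      TmEq E t₁ t₁' ∧ TmEq E t₂ t₂') ∨
  (∃ (l : ℕ) (R : L.Relations l) (ts ts' : Fin l → L.Term ℕ),
      X = Fm.rel R ts ∧ Y = Fm.rel R ts' ∧ ∀ i, TmEq E (ts i) (ts' i))

theorem CompEq.atomic_left {E : Multiset (Fm L)} {X Y : Fm L} (h : CompEq E X Y) : X.IsAtomic := by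
  rcases h with ⟨t₁, t₂, t₁', t₂', rfl, -⟩ | ⟨l, R, ts, ts', rfl, -⟩
  exacts [.equal _ _, .rel _ _]

theorem CompEq.atomic_right {E : Multiset (Fm L)} {X Y : Fm L} (h : CompEq E X Y) : Y.IsAtomic := by
  rcases h with ⟨t₁, t₂, t₁', t₂', -, rfl, -⟩ | ⟨l, R, ts, ts', -, rfl, -⟩
  exacts [.equal _ _, .rel _ _]

theorem CompEq.symm {E : Multiset (Fm L)} {X Y : Fm L} (h : CompEq E X Y) : CompEq E Y X := by
  rcases h with ⟨t₁, t₂, t₁', t₂', rfl, rfl, h₁, h₂⟩ | ⟨l, R, ts, ts', rfl, rfl, h⟩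
  · exact Or.inl ⟨_, _, _, _, rfl, rfl, h₁.symm, h₂.symm⟩
  · exact Or.inr ⟨_, _, _, _, rfl, rfl, fun i => (h i).symm⟩

theorem CompEq.trans {E : Multiset (Fm L)} {X Y Z : Fm L} (h : CompEq E X Y)
    (h' : CompEq E Y Z) : CompEq E X Z := by
  rcases h with ⟨t₁, t₂, t₁', t₂', rfl, rfl, h₁, h₂⟩ | ⟨l, R, ts, ts', rfl, rfl, h⟩
  · rcases h' with ⟨s₁, s₂, s₁', s₂', he, rfl, h₁', h₂'⟩ | ⟨l, R, ts, ts', he, -⟩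
    · obtain ⟨rfl, rfl⟩ : t₁' = s₁ ∧ t₂' = s₂ := by
        constructor <;> injection he with h1 h2
      exact Or.inl ⟨_, _, _, _, rfl, rfl, h₁.trans h₁', h₂.trans h₂'⟩
    · exact absurd he (by simp)
  · rcases h' with ⟨s₁, s₂, s₁', s₂', he, -⟩ | ⟨l', R', us, us', he, rfl, h'⟩
    · exact absurd he (by simp)
    · obtain rfl : l = l' := by injection he
      obtain ⟨rfl, rfl⟩ : R = R' ∧ ts' = us := by
        constructor <;> injection he with h1 h2 <;> first
          | exact eq_of_heq h1 | exact eq_of_heq h2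
      exact Or.inr ⟨_, _, _, _, rfl, rfl, fun i => (h i).trans (h' i)⟩

theorem compEq_mono {E E' : Multiset (Fm L)}
    (hE : ∀ a b : L.Term ℕ, Fm.equal a b ∈ E → Fm.equal a b ∈ E')
    {X Y : Fm L} (h : CompEq E X Y) : CompEq E' X Y := by
  rcases h with ⟨t₁, t₂, t₁', t₂', rfl, rfl, h₁, h₂⟩ | ⟨l, R, ts, ts', rfl, rfl, h⟩
  · exact Or.inl ⟨_, _, _, _, rfl, rfl, tmEq_mono hE h₁, tmEq_mono hE h₂⟩
  · exact Or.inr ⟨_, _, _, _, rfl, rfl, fun i => tmEq_mono hE (h i)⟩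

theorem CompEq.refl {E : Multiset (Fm L)} {X : Fm L} (h : X.IsAtomic) : CompEq E X X := by
  cases h with
  | equal t₁ t₂ => exact Or.inl ⟨_, _, _, _, rfl, rfl, .refl _, .refl _⟩
  | rel R ts => exact Or.inr ⟨_, _, _, _, rfl, rfl, fun i => .refl _⟩

/-- replacing the unique occurrence of a marker variable by equal terms gives
componentwise equal atomic formulas -/
theorem compEq_subst {E : Multiset (Fm L)} {P : Fm L} (hP : P.IsAtomic) {w : ℕ}
    (h1 : Fm.fCount w P = 1) {a b : L.Term ℕ} (hab : TmEq E a b) :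
    CompEq E (P.subst w a) (P.subst w b) := by
  have key : ∀ t : L.Term ℕ, tCount w t ≤ 1 →
      TmEq E (t.subst (Function.update Term.var w a)) (t.subst (Function.update Term.var w b)) := by
    intro t ht
    rcases Nat.le_one_iff_eq_zero_or_eq_one.mp ht with h0 | hone
    · rw [tsubst_id h0, tsubst_id h0]; exact .refl _
    · exact hab.congr hone
  cases hP with
  | equal t₁ t₂ =>
      simp only [Fm.fCount] at h1
      exact Or.inl ⟨_, _, _, _, subst_equal .., subst_equal ..,
        key t₁ (by omega), key t₂ (by omega)⟩
  | rel R ts =>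
      simp only [Fm.fCount] at h1
      refine Or.inr ⟨_, _, _, _, subst_rel .., subst_rel .., fun i => key (ts i) ?_⟩
      calc tCount w (ts i) ≤ Finset.univ.sum fun j => tCount w (ts j) :=
            Finset.single_le_sum (f := fun j => tCount w (ts j)) (fun _ _ => Nat.zero_le _)
              (Finset.mem_univ i)
      _ ≤ 1 := le_of_eq h1

end ReplAux

namespace ReplAux

open Fm

variable {L : FirstOrder.Language.{u, v}}

/-- one-position rewrite between atomic formulas along an equational consequence -/
def FmStep (E : Multiset (Fm L)) (X Y : Fm L) : Prop :=
  ∃ (P : Fm L) (w : ℕ) (a b : L.Term ℕ), P.IsAtomic ∧ Fm.fCount w P = 1 ∧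
    tCount w a = 0 ∧ tCount w b = 0 ∧ TmEq E a b ∧ X = P.subst w a ∧ Y = P.subst w b

theorem tsubst_update_var_self {w : ℕ} {x : L.Term ℕ} :
    (Term.var w : L.Term ℕ).subst (Function.update Term.var w x) = x := by
  simp [Function.update_self]

theorem tcount_var_self (w : ℕ) : tCount w (Term.var w : L.Term ℕ) = 1 := by simp [tCount]

/-- chains of one-position rewrites realize componentwise equality -/
theorem compEq_chain {E : Multiset (Fm L)} {X Y : Fm L} (h : CompEq E X Y) :
    Relation.ReflTransGen (FmStep E) X Y := by
  rcases h with ⟨t₁, t₂, t₁', t₂', rfl, rfl, h₁, h₂⟩ | ⟨l, R, ts, ts', rfl, rfl, h⟩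
  · -- equalities: rewrite the two components one at a time
    have step1 : FmStep E (Fm.equal t₁ t₂) (Fm.equal t₁' t₂) := by
      set w := max (maxVarT t₂) (max (maxVarT t₁) (maxVarT t₁')) + 1 with hw
      refine ⟨Fm.equal (Term.var w) t₂, w, t₁, t₁', .equal _ _, ?_, ?_, ?_, h₁, ?_, ?_⟩
      · simp [Fm.fCount, tcount_var_self, tcount_eq_zero_of_gt (show maxVarT t₂ < w by omega)]
      · exact tcount_eq_zero_of_gt (by omega)
      · exact tcount_eq_zero_of_gt (by omega)
      · rw [subst_equal, tsubst_update_var_self,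
          tsubst_id (tcount_eq_zero_of_gt (show maxVarT t₂ < w by omega))]
      · rw [subst_equal, tsubst_update_var_self,
          tsubst_id (tcount_eq_zero_of_gt (show maxVarT t₂ < w by omega))]
    have step2 : FmStep E (Fm.equal t₁' t₂) (Fm.equal t₁' t₂') := by
      set w := max (maxVarT t₁') (max (maxVarT t₂) (maxVarT t₂')) + 1 with hw
      refine ⟨Fm.equal t₁' (Term.var w), w, t₂, t₂', .equal _ _, ?_, ?_, ?_, h₂, ?_, ?_⟩
      · simp [Fm.fCount, tcount_var_self, tcount_eq_zero_of_gt (show maxVarT t₁' < w by omega)]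
      · exact tcount_eq_zero_of_gt (by omega)
      · exact tcount_eq_zero_of_gt (by omega)
      · rw [subst_equal, tsubst_update_var_self,
          tsubst_id (tcount_eq_zero_of_gt (show maxVarT t₁' < w by omega))]
      · rw [subst_equal, tsubst_update_var_self,
          tsubst_id (tcount_eq_zero_of_gt (show maxVarT t₁' < w by omega))]
    exact Relation.ReflTransGen.head step1 (Relation.ReflTransGen.head step2 .refl)
  · -- relational atoms: rewrite the arguments one at a time
    suffices H : ∀ d i, i + d = l →
        Relation.ReflTransGen (FmStep E)
          (Fm.rel R fun j => if (j : ℕ) < i then ts' j else ts j) (Fm.rel R ts') by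
      have := H l 0 (by omega)
      simpa using this
    intro d
    induction d with
    | zero =>
        intro i hi
        have : (fun j : Fin l => if (j : ℕ) < i then ts' j else ts j) = ts' := by
          funext j; simp [show (j : ℕ) < i by omega]
        rw [this]
    | succ d ih =>
        intro i hi
        have hil : i < l := by omega
        set w := (Finset.univ.sup fun j : Fin l => max (maxVarT (ts j)) (maxVarT (ts' j))) + 1
          with hwdef
        have hfresh : ∀ j : Fin l, tCount w (ts j) = 0 ∧ tCount w (ts' j) = 0 := by
          refine fun j => ⟨?_, ?_⟩ <;>
            refine tcount_eq_zero_of_gt (lt_of_le_of_lt (le_trans ?_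
              (Finset.le_sup (f := fun j : Fin l => max (maxVarT (ts j)) (maxVarT (ts' j)))
                (Finset.mem_univ j))) (Nat.lt_succ_self _))
          exacts [le_max_left _ _, le_max_right _ _]
        set i' : Fin l := ⟨i, hil⟩ with hi'
        set mid : Fin l → L.Term ℕ := fun j => if (j : ℕ) < i then ts' j else ts j with hmid
        refine Relation.ReflTransGen.head (b := Fm.rel R fun j => if (j : ℕ) < i + 1 then ts' j else ts j) ?_ (ih (i + 1) (by omega))
        refine ⟨Fm.rel R (Function.update mid i' (Term.var w)), w, ts i', ts' i',
          .rel _ _, ?_, (hfresh i').1, (hfresh i').2, h i', ?_, ?_⟩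
        · simp only [Fm.fCount]
          rw [Finset.sum_eq_single i']
          · simp [Function.update_self, tcount_var_self]
          · intro j _ hj
            rw [Function.update_of_ne hj]
            simp only [hmid]
            split
            · exact (hfresh j).2
            · exact (hfresh j).1
          · simp
        · rw [subst_rel]
          congr 1
          funext j
          by_cases hj : j = i'
          · subst hj
            simp only [Function.update_self, tsubst_update_var_self, hmid]
            simp [hi']
          · rw [Function.update_of_ne hj]
            simp only [hmid]
            split
            · exact (tsubst_id (hfresh j).2).symm
            · exact (tsubst_id (hfresh j).1).symm
        · rw [subst_rel]
          congr 1
          funext j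
          by_cases hj : j = i'
          · subst hj
            simp only [Function.update_self, tsubst_update_var_self]
            simp [hi']
          · rw [Function.update_of_ne hj]
            have hji : ((j : ℕ) < i + 1) ↔ ((j : ℕ) < i) := by
              constructor <;> intro hh
              · rcases Nat.lt_succ_iff_lt_or_eq.mp hh with hh' | hh'
                · exact hh'
                · exact absurd (Fin.ext hh' : j = i') hj
              · omega
            simp only [hmid, hji]
            split
            · exact (tsubst_id (hfresh j).2).symm
            · exact (tsubst_id (hfresh j).1).symm

end ReplAux

namespace ReplAux

open Fm

variable {L : FirstOrder.Language.{u, v}}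

theorem fcount_subst_update {y w : ℕ} (hyw : y ≠ w) {P : Fm L} (hP : P.IsAtomic)
    (x : L.Term ℕ) :
    Fm.fCount y (P.subst w x) = Fm.fCount y P + Fm.fCount w P * tCount y x := by
  cases hP with
  | equal t₁ t₂ =>
      simp only [subst_equal, Fm.fCount, tcount_subst_update hyw]
      ring
  | rel R ts =>
      simp only [subst_rel, Fm.fCount]
      rw [Finset.sum_congr rfl fun i _ => tcount_subst_update hyw x (ts i),
        Finset.sum_add_distrib, Finset.sum_mul]

theorem tcount_subst_update_self (w : ℕ) (x t : L.Term ℕ) :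
    tCount w (t.subst (Function.update Term.var w x)) = tCount w t * tCount w x := by
  induction t with
  | var z =>
      by_cases hz : z = w
      · subst hz; simp [tCount, Function.update_self]
      · simp [tCount, Function.update_of_ne hz, hz]
  | func f ts ih =>
      simp only [Term.subst, tCount]
      rw [Finset.sum_congr rfl fun i _ => ih i, Finset.sum_mul]

theorem fcount_subst_self (w : ℕ) {P : Fm L} (hP : P.IsAtomic) (x : L.Term ℕ) :
    Fm.fCount w (P.subst w x) = Fm.fCount w P * tCount w x := by
  cases hP with
  | equal t₁ t₂ =>
      simp only [subst_equal, Fm.fCount, tcount_subst_update_self]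
      ring
  | rel R ts =>
      simp only [subst_rel, Fm.fCount]
      rw [Finset.sum_congr rfl fun i _ => tcount_subst_update_self w x (ts i), Finset.sum_mul]

theorem fcount_args_zero {w : ℕ} {t₁ t₂ : L.Term ℕ}
    (h : Fm.fCount w (Fm.equal t₁ t₂) = 0) : tCount w t₁ = 0 ∧ tCount w t₂ = 0 := by
  simp only [Fm.fCount] at h; omega

theorem fsubst_subst {P : Fm L} (hP : P.IsAtomic) {w₃ : ℕ} (hfresh : Fm.fCount w₃ P = 0)
    (w : ℕ) (c' z : L.Term ℕ) :
    (P.subst w c').subst w₃ z = P.subst w (c'.subst (Function.update Term.var w₃ z)) := by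
  have key : ∀ t : L.Term ℕ, tCount w₃ t = 0 →
      (t.subst (Function.update Term.var w c')).subst (Function.update Term.var w₃ z) =
        t.subst (Function.update Term.var w (c'.subst (Function.update Term.var w₃ z))) := by
    intro t ht
    rw [tsubst_comp]
    refine tsubst_congr fun z' hz' => ?_
    by_cases hzw : z' = w
    · subst hzw; simp [Function.update_self]
    · rw [Function.update_of_ne hzw, Function.update_of_ne hzw]
      have : z' ≠ w₃ := by rintro rfl; exact hz' ht
      simp [Term.subst, Function.update_of_ne this]
  cases hP with
  | equal t₁ t₂ =>
      obtain ⟨h₁, h₂⟩ := fcount_args_zero hfresh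
      simp only [subst_equal, key t₁ h₁, key t₂ h₂]
  | rel R ts =>
      simp only [Fm.fCount] at hfresh
      simp only [subst_rel]
      congr 1
      funext i
      exact key (ts i) (Finset.sum_eq_zero_iff.mp hfresh i (Finset.mem_univ i))

/-- derivability (with some height) in `G3c₁^=⁻` -/
def Drv (Γ Δ : Multiset (Fm L)) : Prop := ∃ k, DerC (ReplMinus1 L) k Γ Δ

theorem drv_repl {s r : L.Term ℕ} {w : ℕ} {P : Fm L} {Γ₀ Δ : Multiset (Fm L)}
    (hP : P.IsAtomic) (hs : tCount w s = 0) (hr : tCount w r = 0) (h1 : Fm.fCount w P = 1)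
    (h : Drv (Fm.equal s r ::ₘ P.subst w r ::ₘ Γ₀) Δ) :
    Drv (Fm.equal s r ::ₘ P.subst w s ::ₘ Γ₀) Δ := by
  obtain ⟨k, d⟩ := h
  exact ⟨k + 1, DerC.repl ⟨s, r, w, P, Γ₀, hP, hs, hr, h1, rfl, rfl⟩ d⟩

theorem drv_ref {t : L.Term ℕ} {Γ Δ : Multiset (Fm L)}
    (h : Drv (Fm.equal t t ::ₘ Γ) Δ) : Drv Γ Δ := by
  obtain ⟨k, d⟩ := h
  exact ⟨k + 1, DerC.ref t d⟩

theorem rot3 {α : Type*} (a b c : α) (s : Multiset α) :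
    a ::ₘ b ::ₘ c ::ₘ s = c ::ₘ a ::ₘ b ::ₘ s := by
  rw [Multiset.cons_swap b c, Multiset.cons_swap a c]

/-- sets of equality formulas contained in a context -/
def EqSub (E G : Multiset (Fm L)) : Prop :=
  ∀ a b : L.Term ℕ, Fm.equal a b ∈ E → Fm.equal a b ∈ G

theorem eqSub_mono {E G G' : Multiset (Fm L)} (h : EqSub E G) (hle : G ≤ G') : EqSub E G' :=
  fun a b hm => Multiset.mem_of_le hle (h a b hm)

/-- realizability of a rewrite at a single marked position, as transformation of
derivations (with continuation-style premise) -/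
def Real (Δ' E : Multiset (Fm L)) (a b : L.Term ℕ) : Prop :=
  ∀ (P : Fm L) (w : ℕ), P.IsAtomic → Fm.fCount w P = 1 → tCount w a = 0 → tCount w b = 0 →
  ∀ G : Multiset (Fm L), EqSub E G →
  (∀ G', G ≤ G' → Drv (P.subst w b ::ₘ G') Δ') →
  Drv (P.subst w a ::ₘ G) Δ'

theorem key2 {E : Multiset (Fm L)} {a b : L.Term ℕ} (h : TmEq E a b) (Δ' : Multiset (Fm L)) :
    Real Δ' E a b ∧ Real Δ' E b a := by
  induction h with
  | @base a b hmem =>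
      constructor
      · intro P w hP h1 ha hb G hG cont
        obtain ⟨G₀, rfl⟩ := Multiset.exists_cons_of_mem (hG _ _ hmem)
        rw [Multiset.cons_swap]
        refine drv_repl hP ha hb h1 ?_
        rw [Multiset.cons_swap]
        exact cont _ le_rfl
      · intro P w hP h1 hb ha G hG cont
        obtain ⟨G₀, hG₀⟩ := Multiset.exists_cons_of_mem (hG _ _ hmem)
        -- goal : P[w/b] ::ₘ G  where  (a=b) ∈ G
        set w₂ := max (maxVarT a) (maxVarT b) + 1 with hw₂
        have hw₂a : tCount w₂ a = 0 := tcount_eq_zero_of_gt (by omega)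
        have hw₂b : tCount w₂ b = 0 := tcount_eq_zero_of_gt (by omega)
        have e₁ : (Fm.equal (Term.var w₂) a).subst w₂ a = Fm.equal a a := by
          rw [subst_equal, tsubst_update_var_self, tsubst_id hw₂a]
        have e₂ : (Fm.equal (Term.var w₂) a).subst w₂ b = Fm.equal b a := by
          rw [subst_equal, tsubst_update_var_self, tsubst_id hw₂a]
        refine drv_ref (t := a) ?_
        rw [hG₀, rot3 (Fm.equal a a) (P.subst w b) (Fm.equal a b) G₀, ← e₁]
        refine drv_repl (.equal _ _) hw₂a hw₂b
          (by simp [Fm.fCount, tcount_var_self, hw₂a]) ?_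
        rw [e₂, ← rot3 (Fm.equal b a) (P.subst w b) (Fm.equal a b) G₀]
        refine drv_repl hP hb ha h1 ?_
        have d₃ := cont (Fm.equal b a ::ₘ G) (Multiset.le_cons_self _ _)
        rw [hG₀, Multiset.cons_swap (P.subst w a) (Fm.equal b a)] at d₃
        exact d₃
  | refl a =>
      exact ⟨fun P w hP h1 ha hb G hG cont => cont G le_rfl,
             fun P w hP h1 ha hb G hG cont => cont G le_rfl⟩
  | @symm a b h ih => exact ⟨ih.2, ih.1⟩
  | @trans a b c h₁ h₂ ih₁ ih₂ =>
      have main : ∀ x z y : L.Term ℕ, TmEq E x y → TmEq E y z →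
          Real Δ' E x y → Real Δ' E y z → Real Δ' E x z := by
        intro x z y hxy hyz r₁ r₂
        intro P w hP h1 hx hz G hG cont
        set w' := max (maxVarF P) (max (maxVarT x) (max (maxVarT y) (maxVarT z))) + 1 with hw'
        have hfP : Fm.fCount w' P = 0 := fcount_eq_zero_of_gt hP (by omega)
        have hne : w' ≠ w := by rintro rfl; rw [hfP] at h1; exact absurd h1 one_ne_zero.symm
        have hx' : tCount w' x = 0 := tcount_eq_zero_of_gt (by omega)
        have hy' : tCount w' y = 0 := tcount_eq_zero_of_gt (by omega)
        have hz' : tCount w' z = 0 := tcount_eq_zero_of_gt (by omega)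
        set P' := P.subst w (Term.var w') with hP'def
        have hP'at : P'.IsAtomic := isAtomic_subst hP w _
        have h1' : Fm.fCount w' P' = 1 := by
          rw [hP'def, fcount_subst_update hne hP, hfP, h1, tcount_var_self]
        have hid : ∀ u : L.Term ℕ, P'.subst w' u = P.subst w u := by
          intro u
          rw [hP'def, fsubst_subst hP hfP, tsubst_update_var_self]
        rw [← hid x]
        refine r₁ P' w' hP'at h1' hx' hy' G hG ?_
        intro G' hle
        refine r₂ P' w' hP'at h1' hy' hz' G' (eqSub_mono hG hle) ?_
        intro G'' hle'
        rw [hid z]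
        exact cont G'' (le_trans hle hle')
      exact ⟨main a c b h₁ h₂ ih₁.1 ih₂.1, main c a b h₂.symm h₁.symm ih₂.2 ih₁.2⟩
  | @congr x y c w₀ hxy hc1 ih =>
      have main : ∀ x y : L.Term ℕ, tCount w₀ c = 1 → TmEq E x y → Real Δ' E x y →
          Real Δ' E (c.subst (Function.update Term.var w₀ x))
            (c.subst (Function.update Term.var w₀ y)) := by
        intro x y hc1 hxy r
        intro P w hP h1 ha hb G hG cont
        set w₃ := max (maxVarF P)
          (max (maxVarT c) (max (maxVarT x) (maxVarT y))) + 1 with hw₃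
        have hfP : Fm.fCount w₃ P = 0 := fcount_eq_zero_of_gt hP (by omega)
        have hnew : w₃ ≠ w := by rintro rfl; rw [hfP] at h1; exact absurd h1 one_ne_zero.symm
        have hcf : tCount w₃ c = 0 := tcount_eq_zero_of_gt (by omega)
        have hx₃ : tCount w₃ x = 0 := tcount_eq_zero_of_gt (by omega)
        have hy₃ : tCount w₃ y = 0 := tcount_eq_zero_of_gt (by omega)
        set c' := c.subst (Function.update Term.var w₀ (Term.var w₃)) with hc'def
        set Q := P.subst w c' with hQdef
        have hQat : Q.IsAtomic := isAtomic_subst hP w _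
        have hcvar : ∀ z', tCount z' c ≠ 0 → z' ≠ w₀ → tCount w₃ (Term.var z' : L.Term ℕ) = 0 := by
          intro z' hz' _
          have : z' ≠ w₃ := by rintro rfl; exact hz' hcf
          simp [tCount, this]
        have hQ1 : Fm.fCount w₃ Q = 1 := by
          rw [hQdef, fcount_subst_update hnew hP, hfP, h1, hc'def,
            tcount_subst_marker hcvar, hc1]
        have hQsub : ∀ u : L.Term ℕ,
            Q.subst w₃ u = P.subst w (c.subst (Function.update Term.var w₀ u)) := by
          intro u
          rw [hQdef, fsubst_subst hP hfP, hc'def, tsubst_update_comp hcvar]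
        rw [← hQsub x]
        refine r Q w₃ hQat hQ1 hx₃ hy₃ G hG ?_
        intro G' hle
        rw [hQsub y]
        exact cont G' hle
      exact ⟨main x y hc1 hxy ih.1, main y x hc1 hxy.symm ih.2⟩

end ReplAux

namespace ReplAux

open Fm

variable {L : FirstOrder.Language.{u, v}}

theorem chainReal {E : Multiset (Fm L)} {X C : Fm L}
    (h : Relation.ReflTransGen (FmStep E) X C) (Δ' : Multiset (Fm L)) :
    ∀ G : Multiset (Fm L), EqSub E G → (∀ G', G ≤ G' → Drv (C ::ₘ G') Δ') →
      Drv (X ::ₘ G) Δ' := by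
  induction h using Relation.ReflTransGen.head_induction_on with
  | refl => exact fun G _ cont => cont G le_rfl
  | head hstep _ ih =>
      intro G hG cont
      obtain ⟨P, w, a, b, hP, h1, ha, hb, hab, rfl, rfl⟩ := hstep
      refine (key2 hab Δ').1 P w hP h1 ha hb G hG fun G' hle => ?_
      exact ih G' (eqSub_mono hG hle) fun G'' hle' => cont G'' (le_trans hle hle')

theorem dup_eq {a b : L.Term ℕ} {G Δ' : Multiset (Fm L)} (hmem : Fm.equal a b ∈ G)
    (h : Drv (Fm.equal a b ::ₘ G) Δ') : Drv G Δ' := by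
  obtain ⟨G₀, rfl⟩ := Multiset.exists_cons_of_mem hmem
  set w₂ := max (maxVarT a) (maxVarT b) + 1 with hw₂
  have hw₂a : tCount w₂ a = 0 := tcount_eq_zero_of_gt (by omega)
  have hw₂b : tCount w₂ b = 0 := tcount_eq_zero_of_gt (by omega)
  have e₁ : (Fm.equal a (Term.var w₂)).subst w₂ a = Fm.equal a a := by
    rw [subst_equal, tsubst_update_var_self, tsubst_id hw₂a]
  have e₂ : (Fm.equal a (Term.var w₂)).subst w₂ b = Fm.equal a b := by
    rw [subst_equal, tsubst_update_var_self, tsubst_id hw₂a]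
  refine drv_ref (t := a) ?_
  rw [Multiset.cons_swap, ← e₁]
  refine drv_repl (.equal _ _) hw₂a hw₂b
    (by simp [Fm.fCount, tcount_var_self, hw₂a]) ?_
  rw [e₂]
  exact h

theorem axReach {Θ Δ₀ : Multiset (Fm L)} {C : Fm L}
    (h : (∃ a b, C = Fm.equal a b ∧ TmEq Θ a b) ∨ ∃ B ∈ Θ, CompEq Θ B C) :
    Drv Θ (C ::ₘ Δ₀) := by
  rcases h with ⟨a, b, rfl, hab⟩ | ⟨B, hB, hBC⟩
  · set w := max (maxVarT a) (maxVarT b) + 1 with hw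
    have hwa : tCount w a = 0 := tcount_eq_zero_of_gt (by omega)
    have hwb : tCount w b = 0 := tcount_eq_zero_of_gt (by omega)
    have e₁ : (Fm.equal a (Term.var w)).subst w a = Fm.equal a a := by
      rw [subst_equal, tsubst_update_var_self, tsubst_id hwa]
    have e₂ : (Fm.equal a (Term.var w)).subst w b = Fm.equal a b := by
      rw [subst_equal, tsubst_update_var_self, tsubst_id hwa]
    refine drv_ref (t := a) ?_
    rw [← e₁]
    refine (key2 hab _).1 (Fm.equal a (Term.var w)) w (.equal _ _)
      (by simp [Fm.fCount, tcount_var_self, hwa]) hwa hwb Θ (fun _ _ hm => hm)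
      fun G' hle => ?_
    rw [e₂]
    exact ⟨0, DerC.ax (.equal _ _)⟩
  · have hCat : C.IsAtomic := hBC.atomic_right
    have chain := compEq_chain hBC
    obtain ⟨Θ₀, rfl⟩ := Multiset.exists_cons_of_mem hB
    rcases hBC.atomic_left with ⟨a, b⟩ | ⟨R, ts⟩
    · refine dup_eq (Multiset.mem_cons_self _ _) ?_
      exact chainReal chain _ _ (fun _ _ hm => hm) fun G' hle => ⟨0, DerC.ax hCat⟩
    · refine chainReal chain _ _ (fun x y hm => ?_) fun G' hle => ⟨0, DerC.ax hCat⟩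
      rcases Multiset.mem_cons.mp hm with he | he
      · exact absurd he (by simp)
      · exact he

theorem derC_mono {rp : Multiset (Fm L) → Multiset (Fm L) → Prop} {n n' : ℕ}
    {Γ Δ : Multiset (Fm L)} (h : DerC rp n Γ Δ) (hn : n ≤ n') : DerC rp n' Γ Δ := by
  induction h generalizing n' with
  | ax hP => exact .ax hP
  | botL => exact .botL
  | andL _ ih =>
      obtain ⟨m, rfl⟩ : ∃ m, n' = m + 1 := ⟨n' - 1, by omega⟩
      exact .andL (ih (by omega))
  | andR _ _ ih₁ ih₂ =>
      obtain ⟨m, rfl⟩ : ∃ m, n' = m + 1 := ⟨n' - 1, by omega⟩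
      exact .andR (ih₁ (by omega)) (ih₂ (by omega))
  | orL _ _ ih₁ ih₂ =>
      obtain ⟨m, rfl⟩ : ∃ m, n' = m + 1 := ⟨n' - 1, by omega⟩
      exact .orL (ih₁ (by omega)) (ih₂ (by omega))
  | orR _ ih =>
      obtain ⟨m, rfl⟩ : ∃ m, n' = m + 1 := ⟨n' - 1, by omega⟩
      exact .orR (ih (by omega))
  | impL _ _ ih₁ ih₂ =>
      obtain ⟨m, rfl⟩ : ∃ m, n' = m + 1 := ⟨n' - 1, by omega⟩
      exact .impL (ih₁ (by omega)) (ih₂ (by omega))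
  | impR _ ih =>
      obtain ⟨m, rfl⟩ : ∃ m, n' = m + 1 := ⟨n' - 1, by omega⟩
      exact .impR (ih (by omega))
  | allL hf _ ih =>
      obtain ⟨m, rfl⟩ : ∃ m, n' = m + 1 := ⟨n' - 1, by omega⟩
      exact .allL hf (ih (by omega))
  | allR hf hy hΓ hΔ _ ih =>
      obtain ⟨m, rfl⟩ : ∃ m, n' = m + 1 := ⟨n' - 1, by omega⟩
      exact .allR hf hy hΓ hΔ (ih (by omega))
  | exL hf hy hΓ hΔ _ ih =>
      obtain ⟨m, rfl⟩ : ∃ m, n' = m + 1 := ⟨n' - 1, by omega⟩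
      exact .exL hf hy hΓ hΔ (ih (by omega))
  | exR hf _ ih =>
      obtain ⟨m, rfl⟩ : ∃ m, n' = m + 1 := ⟨n' - 1, by omega⟩
      exact .exR hf (ih (by omega))
  | ref t _ ih =>
      obtain ⟨m, rfl⟩ : ∃ m, n' = m + 1 := ⟨n' - 1, by omega⟩
      exact .ref t (ih (by omega))
  | repl hr _ ih =>
      obtain ⟨m, rfl⟩ : ∃ m, n' = m + 1 := ⟨n' - 1, by omega⟩
      exact .repl hr (ih (by omega))

end ReplAux

namespace ReplAux

open Fm

variable {L : FirstOrder.Language.{u, v}}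

/-- some equality formula of `Λ` contains the variable `y` -/
def EqMem (Λ : Multiset (Fm L)) (y : ℕ) : Prop :=
  ∃ a b : L.Term ℕ, Fm.equal a b ∈ Λ ∧ y ∈ (Fm.equal a b : Fm L).freeVars

def PairOK (Θ Λ : Multiset (Fm L)) (X X' : Fm L) : Prop :=
  (X = X' ∨ CompEq Θ X X') ∧ ∀ y, y ∈ X.freeVars → y ∈ X'.freeVars ∨ EqMem Λ y

def XiOK (Θ : Multiset (Fm L)) (X : Fm L) : Prop :=
  (∃ a b, X = Fm.equal a b ∧ TmEq Θ a b) ∨ ∃ B ∈ Θ, CompEq Θ B X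

def Match (Θ Λ : Multiset (Fm L)) : Prop :=
  ∃ Θ' Ξ, Λ = Θ' + Ξ ∧ Multiset.Rel (PairOK Θ Λ) Θ Θ' ∧ ∀ X ∈ Ξ, XiOK Θ X

theorem pairOK_refl (Θ Λ : Multiset (Fm L)) (X : Fm L) : PairOK Θ Λ X X :=
  ⟨Or.inl rfl, fun y hy => Or.inl hy⟩

theorem xiOK_atomic {Θ : Multiset (Fm L)} {X : Fm L} (h : XiOK Θ X) : X.IsAtomic := by
  rcases h with ⟨a, b, rfl, -⟩ | ⟨B, -, hBC⟩
  · exact .equal _ _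
  · exact hBC.atomic_right

theorem eqMem_mono {Λ₁ Λ₂ : Multiset (Fm L)}
    (h : ∀ a b : L.Term ℕ, Fm.equal a b ∈ Λ₁ → Fm.equal a b ∈ Λ₂) {y : ℕ}
    (hm : EqMem Λ₁ y) : EqMem Λ₂ y := by
  obtain ⟨a, b, hab, hy⟩ := hm
  exact ⟨a, b, h a b hab, hy⟩

theorem pairOK_mono {Θ₁ Θ₂ Λ₁ Λ₂ : Multiset (Fm L)}
    (hEq : ∀ a b : L.Term ℕ, Fm.equal a b ∈ Θ₁ → Fm.equal a b ∈ Θ₂)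
    (hΛ : ∀ y, EqMem Λ₁ y → EqMem Λ₂ y) {X X' : Fm L}
    (h : PairOK Θ₁ Λ₁ X X') : PairOK Θ₂ Λ₂ X X' := by
  obtain ⟨h₁, h₂⟩ := h
  refine ⟨?_, fun y hy => (h₂ y hy).imp id (hΛ y)⟩
  rcases h₁ with rfl | hc
  · exact Or.inl rfl
  · exact Or.inr (compEq_mono hEq hc)

theorem xiOK_mono {Θ₁ Θ₂ : Multiset (Fm L)}
    (hEq : ∀ a b : L.Term ℕ, Fm.equal a b ∈ Θ₁ → Fm.equal a b ∈ Θ₂)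
    (hAt : ∀ B : Fm L, B ∈ Θ₁ → B.IsAtomic → B ∈ Θ₂) {X : Fm L}
    (h : XiOK Θ₁ X) : XiOK Θ₂ X := by
  rcases h with ⟨a, b, rfl, hab⟩ | ⟨B, hB, hBC⟩
  · exact Or.inl ⟨a, b, rfl, tmEq_mono hEq hab⟩
  · exact Or.inr ⟨B, hAt B hB hBC.atomic_left, compEq_mono hEq hBC⟩

theorem add_cons_cases {α : Type*} {a : α} {s t u : Multiset α} (h : a ::ₘ s = t + u) :
    (∃ t', t = a ::ₘ t' ∧ s = t' + u) ∨ (∃ u', u = a ::ₘ u' ∧ s = t + u') := by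
  have hmem : a ∈ t + u := by rw [← h]; exact Multiset.mem_cons_self a s
  rcases Multiset.mem_add.mp hmem with hm | hm
  · obtain ⟨t', rfl⟩ := Multiset.exists_cons_of_mem hm
    refine Or.inl ⟨t', rfl, ?_⟩
    rw [Multiset.cons_add] at h
    exact (Multiset.cons_inj_right a).mp h
  · obtain ⟨u', rfl⟩ := Multiset.exists_cons_of_mem hm
    refine Or.inr ⟨u', rfl, ?_⟩
    rw [Multiset.add_cons] at h
    exact (Multiset.cons_inj_right a).mp h

theorem rel_mem_right {α : Type*} {r : α → α → Prop} {s t : Multiset α}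
    (h : Multiset.Rel r s t) {b : α} (hb : b ∈ t) : ∃ a ∈ s, r a b := by
  induction h with
  | zero => exact absurd hb (by simp)
  | @cons a b' as bs hr hrel ih =>
      rcases Multiset.mem_cons.mp hb with rfl | hb'
      · exact ⟨a, Multiset.mem_cons_self _ _, hr⟩
      · obtain ⟨a', ha', hr'⟩ := ih hb'
        exact ⟨a', Multiset.mem_cons_of_mem ha', hr'⟩

theorem rel_mem_left {α : Type*} {r : α → α → Prop} {s t : Multiset α}
    (h : Multiset.Rel r s t) {a : α} (ha : a ∈ s) : ∃ b ∈ t, r a b := by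
  induction h with
  | zero => exact absurd ha (by simp)
  | @cons a' b' as bs hr hrel ih =>
      rcases Multiset.mem_cons.mp ha with rfl | ha'
      · exact ⟨b', Multiset.mem_cons_self _ _, hr⟩
      · obtain ⟨b, hb, hr'⟩ := ih ha'
        exact ⟨b, Multiset.mem_cons_of_mem hb, hr'⟩

theorem match_eq_tmEq {Θ Λ : Multiset (Fm L)} (h : Match Θ Λ) {a b : L.Term ℕ}
    (hm : Fm.equal a b ∈ Λ) : TmEq Θ a b := by
  obtain ⟨Θ', Ξ, rfl, hRel, hΞ⟩ := h
  have fromCompEq : ∀ X : Fm L, X ∈ Θ → CompEq Θ X (Fm.equal a b) → TmEq Θ a b := by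
    intro X hX hc
    rcases hc with ⟨t₁, t₂, t₁', t₂', rfl, he, h₁, h₂⟩ | ⟨l, R, ts, ts', -, he, -⟩
    · obtain ⟨rfl, rfl⟩ : t₁' = a ∧ t₂' = b := by
        constructor <;> injection he with e₁ e₂ <;> first | exact e₁.symm | exact e₂.symm
      exact (h₁.symm.trans (TmEq.base hX)).trans h₂
    · exact absurd he (by simp)
  rcases Multiset.mem_add.mp hm with hm' | hm'
  · obtain ⟨X, hX, hp⟩ := rel_mem_right hRel hm'
    rcases hp.1 with rfl | hc
    · exact .base hX
    · exact fromCompEq X hX hc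
  · rcases hΞ _ hm' with ⟨a'', b'', he, hab⟩ | ⟨B, hB, hBC⟩
    · injection he with e₁ e₂
      rw [e₁, e₂]
      exact hab
    · exact fromCompEq B hB hBC

theorem match_replace {Θ Λ₀ : Multiset (Fm L)} {F F' : Fm L} (h : Match Θ (F ::ₘ Λ₀))
    (hFF' : CompEq Θ F F')
    (hFV : ∀ y, y ∈ F.freeVars → y ∈ F'.freeVars ∨ EqMem (F' ::ₘ Λ₀) y)
    (hEqFV : ∀ y, EqMem (F ::ₘ Λ₀) y → EqMem (F' ::ₘ Λ₀) y) :
    Match Θ (F' ::ₘ Λ₀) := by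
  obtain ⟨Θ', Ξ, hΛ, hRel, hΞ⟩ := h
  rcases add_cons_cases hΛ with ⟨Θ'₀, rfl, rfl⟩ | ⟨Ξ₀, rfl, rfl⟩
  · obtain ⟨X, Θr, hp, hRel', rfl⟩ := Multiset.rel_cons_right.mp hRel
    refine ⟨F' ::ₘ Θ'₀, Ξ, by rw [Multiset.cons_add], ?_, hΞ⟩
    refine Multiset.Rel.cons ⟨?_, ?_⟩ (hRel'.mono fun a _ b _ hab => pairOK_mono (fun _ _ hm => hm) hEqFV hab)
    · rcases hp.1 with rfl | hc
      · exact Or.inr hFF'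
      · exact Or.inr (hc.trans hFF')
    · intro y hy
      rcases hp.2 y hy with hy' | hy'
      · exact (hFV y hy').imp id id
      · exact Or.inr (hEqFV y hy')
  · refine ⟨Θ', F' ::ₘ Ξ₀, (Multiset.add_cons F' Θ' Ξ₀).symm, ?_, ?_⟩
    · exact hRel.mono fun a _ b _ hab => pairOK_mono (fun _ _ hm => hm) hEqFV hab
    · intro Y hY
      rcases Multiset.mem_cons.mp hY with rfl | hY'
      · rcases hΞ F (Multiset.mem_cons_self _ _) with ⟨a, b, rfl, hab⟩ | ⟨B, hB, hBC⟩
        · rcases hFF' with ⟨t₁, t₂, t₁', t₂', he, rfl, h₁, h₂⟩ | ⟨l, R, ts, ts', he, -⟩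
          · obtain ⟨rfl, rfl⟩ : t₁ = a ∧ t₂ = b := by
              constructor <;> injection he with e₁ e₂ <;> first | exact e₁.symm | exact e₂.symm
            exact Or.inl ⟨t₁', t₂', rfl, (h₁.symm.trans hab).trans h₂⟩
          · exact absurd he (by simp)
        · exact Or.inr ⟨B, hB, hBC.trans hFF'⟩
      · exact hΞ Y (Multiset.mem_cons_of_mem hY')

theorem mem_freeVars_of_fcount {X : Fm L} (hX : X.IsAtomic) {y : ℕ} :
    y ∈ X.freeVars ↔ Fm.fCount y X ≠ 0 := by
  cases hX with
  | equal t₁ t₂ =>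
      simp only [Fm.freeVars, Fm.fCount, Set.mem_setOf_eq]
      omega
  | rel R ts =>
      simp only [Fm.freeVars, Fm.fCount, Set.mem_setOf_eq]
      rw [← not_iff_not]
      push_neg
      rw [Finset.sum_eq_zero_iff]
      constructor
      · intro h i _; exact h i
      · intro h i; exact h i (Finset.mem_univ i)

theorem fv_subst_or {P : Fm L} (hP : P.IsAtomic) {w : ℕ} (h1 : Fm.fCount w P = 1)
    {s' r' : L.Term ℕ} (hs : tCount w s' = 0) :
    ∀ y, y ∈ (P.subst w s').freeVars →
      y ∈ (P.subst w r').freeVars ∨ y ∈ (Fm.equal s' r' : Fm L).freeVars := by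
  intro y hy
  rw [mem_freeVars_of_fcount (isAtomic_subst hP _ _)] at hy
  by_cases hyw : y = w
  · subst hyw
    rw [fcount_subst_self _ hP, hs, Nat.mul_zero] at hy
    exact absurd rfl hy
  · rw [fcount_subst_update hyw hP, h1, Nat.one_mul] at hy
    by_cases hys : tCount y s' = 0
    · rw [hys, Nat.add_zero] at hy
      left
      rw [mem_freeVars_of_fcount (isAtomic_subst hP _ _), fcount_subst_update hyw hP, h1]
      omega
    · right
      simp only [Fm.freeVars, Set.mem_setOf_eq]
      exact Or.inl hys

end ReplAux

namespace ReplAux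

open Fm

variable {L : FirstOrder.Language.{u, v}}

theorem match_cons_nonatomic {Θ Λ' : Multiset (Fm L)} {D : Fm L} (hD : ¬ D.IsAtomic)
    (h : Match Θ (D ::ₘ Λ')) :
    ∃ Θr Θ'' Ξ, Θ = D ::ₘ Θr ∧ Λ' = Θ'' + Ξ ∧
      Multiset.Rel (PairOK Θ (D ::ₘ Λ')) Θr Θ'' ∧ ∀ X ∈ Ξ, XiOK Θ X := by
  obtain ⟨Θ', Ξ, hΛ, hRel, hΞ⟩ := h
  rcases add_cons_cases hΛ with ⟨Θ'₀, rfl, rfl⟩ | ⟨Ξ₀, rfl, rfl⟩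
  · obtain ⟨X, Θr, hp, hRel', rfl⟩ := Multiset.rel_cons_right.mp hRel
    obtain rfl : X = D := by
      rcases hp.1 with rfl | hc
      · rfl
      · exact absurd hc.atomic_right hD
    exact ⟨Θr, Θ'₀, Ξ, rfl, rfl, hRel', hΞ⟩
  · exact absurd (xiOK_atomic (hΞ D (Multiset.mem_cons_self _ _))) hD

theorem match_rebuild {Θ Λ Θr Θ'' Ξ : Multiset (Fm L)} (N : Multiset (Fm L))
    (hRel : Multiset.Rel (PairOK Θ Λ) Θr Θ'') (hΞ : ∀ X ∈ Ξ, XiOK Θ X)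
    (hEq : ∀ a b : L.Term ℕ, Fm.equal a b ∈ Θ → Fm.equal a b ∈ N + Θr)
    (hAt : ∀ B : Fm L, B ∈ Θ → B.IsAtomic → B ∈ N + Θr)
    (hEqΛ : ∀ a b : L.Term ℕ, Fm.equal a b ∈ Λ → Fm.equal a b ∈ N + Θ'' + Ξ) :
    Match (N + Θr) (N + Θ'' + Ξ) := by
  refine ⟨N + Θ'', Ξ, rfl, ?_, fun X hX => xiOK_mono hEq hAt (hΞ X hX)⟩
  exact Multiset.Rel.add (Multiset.rel_refl_of_refl_on fun X _ => pairOK_refl _ _ X)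
    (hRel.mono fun a _ b _ hab => pairOK_mono hEq (fun y hm => eqMem_mono hEqΛ hm) hab)

theorem match_extend_cons {Θ Λ : Multiset (Fm L)} (h : Match Θ Λ) (C : Fm L) :
    Match (C ::ₘ Θ) (C ::ₘ Λ) := by
  obtain ⟨Θ', Ξ, rfl, hRel, hΞ⟩ := h
  refine ⟨C ::ₘ Θ', Ξ, (Multiset.cons_add ..).symm, ?_, fun X hX =>
    xiOK_mono (fun a b hm => Multiset.mem_cons_of_mem hm)
      (fun B hm _ => Multiset.mem_cons_of_mem hm) (hΞ X hX)⟩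
  refine Multiset.Rel.cons (pairOK_refl _ _ C)
    (hRel.mono fun a _ b _ hab => pairOK_mono (fun a b hm => Multiset.mem_cons_of_mem hm)
      (fun y hm => eqMem_mono (fun a b hm' => Multiset.mem_cons_of_mem hm') hm) hab)

theorem match_add_xi {Θ Λ : Multiset (Fm L)} (h : Match Θ Λ) {C : Fm L} (hC : XiOK Θ C) :
    Match Θ (C ::ₘ Λ) := by
  obtain ⟨Θ', Ξ, rfl, hRel, hΞ⟩ := h
  refine ⟨Θ', C ::ₘ Ξ, (Multiset.add_cons ..).symm, ?_, fun X hX => ?_⟩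
  · exact hRel.mono fun a _ b _ hab => pairOK_mono (fun _ _ hm => hm)
      (fun y hm => eqMem_mono (fun a b hm' => Multiset.mem_cons_of_mem hm') hm) hab
  · rcases Multiset.mem_cons.mp hX with rfl | hX'
    · exact hC
    · exact hΞ X hX'

theorem match_fresh {Θ Λ : Multiset (Fm L)} (h : Match Θ Λ) {y : ℕ}
    (hΛ : ∀ C ∈ Λ, y ∉ Fm.freeVars C) : ∀ C ∈ Θ, y ∉ Fm.freeVars C := by
  obtain ⟨Θ', Ξ, rfl, hRel, hΞ⟩ := h
  intro C hC hy
  obtain ⟨C', hC', hp⟩ := rel_mem_left hRel hC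
  rcases hp.2 y hy with hy' | ⟨a, b, hm, hy'⟩
  · exact hΛ C' (Multiset.mem_add.mpr (Or.inl hC')) hy'
  · exact hΛ _ hm hy'

end ReplAux

namespace ReplAux

open Fm

variable {L : FirstOrder.Language.{u, v}}

theorem mega {n : ℕ} {Λ Δ : Multiset (Fm L)} (h : DerC (ReplMinus1 L) n Λ Δ) :
    ∀ Θ : Multiset (Fm L), Match Θ Λ → Drv Θ Δ := by
  induction h with
  | @ax n Γ Δ P hP =>
      intro Θ hM
      obtain ⟨Θ', Ξ, hΛ, hRel, hΞ⟩ := hM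
      rcases add_cons_cases hΛ with ⟨Θ'₀, rfl, rfl⟩ | ⟨Ξ₀, rfl, rfl⟩
      · obtain ⟨X, Θr, hp, hRel', rfl⟩ := Multiset.rel_cons_right.mp hRel
        rcases hp.1 with rfl | hc
        · exact ⟨n, DerC.ax hP⟩
        · exact axReach (Or.inr ⟨X, Multiset.mem_cons_self _ _, hc⟩)
      · exact axReach (hΞ P (Multiset.mem_cons_self _ _))
  | @botL n Γ Δ =>
      intro Θ hM
      obtain ⟨Θr, -, -, rfl, -, -, -⟩ := match_cons_nonatomic (fun h => by cases h) hM
      exact ⟨n, DerC.botL⟩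
  | @andL n Γ Δ A B hprem ih =>
      intro Θ hM
      obtain ⟨Θr, Θ'', Ξ, rfl, rfl, hRel', hΞ'⟩ :=
        match_cons_nonatomic (fun h => by cases h) hM
      have hM₂ := match_rebuild (N := A ::ₘ B ::ₘ 0) hRel' hΞ'
        (by intro a b hm
            rcases Multiset.mem_cons.mp hm with he | hm'
            · exact absurd he (by simp)
            · exact Multiset.mem_add.mpr (Or.inr hm'))
        (by intro C hm hat
            rcases Multiset.mem_cons.mp hm with rfl | hm'
            · cases hat
            · exact Multiset.mem_add.mpr (Or.inr hm'))
        (by intro a b hm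
            rcases Multiset.mem_cons.mp hm with he | hm'
            · exact absurd he (by simp)
            · simp only [Multiset.mem_add] at hm' ⊢
              simp only [Multiset.mem_cons]
              tauto)
      have e₁ : (A ::ₘ B ::ₘ 0) + Θr = A ::ₘ B ::ₘ Θr := by simp [Multiset.cons_add]
      have e₂ : (A ::ₘ B ::ₘ 0) + Θ'' + Ξ = A ::ₘ B ::ₘ (Θ'' + Ξ) := by
        simp [Multiset.cons_add]
      rw [e₁, e₂] at hM₂
      obtain ⟨k, d⟩ := ih _ hM₂
      exact ⟨k + 1, DerC.andL d⟩
  | @andR n Γ Δ A B h₁ h₂ ih₁ ih₂ =>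
      intro Θ hM
      obtain ⟨k₁, d₁⟩ := ih₁ Θ hM
      obtain ⟨k₂, d₂⟩ := ih₂ Θ hM
      exact ⟨max k₁ k₂ + 1, DerC.andR (derC_mono d₁ (le_max_left _ _))
        (derC_mono d₂ (le_max_right _ _))⟩
  | @orL n Γ Δ A B h₁ h₂ ih₁ ih₂ =>
      intro Θ hM
      obtain ⟨Θr, Θ'', Ξ, rfl, rfl, hRel', hΞ'⟩ :=
        match_cons_nonatomic (fun h => by cases h) hM
      have common : ∀ C : Fm L, Match (C ::ₘ Θr) (C ::ₘ (Θ'' + Ξ)) := by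
        intro C
        have hM₂ := match_rebuild (N := C ::ₘ 0) hRel' hΞ'
          (by intro a b hm
              rcases Multiset.mem_cons.mp hm with he | hm'
              · exact absurd he (by simp)
              · exact Multiset.mem_add.mpr (Or.inr hm'))
          (by intro C' hm hat
              rcases Multiset.mem_cons.mp hm with rfl | hm'
              · cases hat
              · exact Multiset.mem_add.mpr (Or.inr hm'))
          (by intro a b hm
              rcases Multiset.mem_cons.mp hm with he | hm'
              · exact absurd he (by simp)
              · simp only [Multiset.mem_add] at hm' ⊢
                simp only [Multiset.mem_cons]
                tauto)
        have e₁ : (C ::ₘ 0) + Θr = C ::ₘ Θr := by simp [Multiset.cons_add]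
        have e₂ : (C ::ₘ 0) + Θ'' + Ξ = C ::ₘ (Θ'' + Ξ) := by simp [Multiset.cons_add]
        rwa [e₁, e₂] at hM₂
      obtain ⟨k₁, d₁⟩ := ih₁ _ (common A)
      obtain ⟨k₂, d₂⟩ := ih₂ _ (common B)
      exact ⟨max k₁ k₂ + 1, DerC.orL (derC_mono d₁ (le_max_left _ _))
        (derC_mono d₂ (le_max_right _ _))⟩
  | @orR n Γ Δ A B h₁ ih =>
      intro Θ hM
      obtain ⟨k, d⟩ := ih Θ hM
      exact ⟨k + 1, DerC.orR d⟩
  | @impL n Γ Δ A B h₁ h₂ ih₁ ih₂ =>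
      intro Θ hM
      obtain ⟨Θr, Θ'', Ξ, rfl, rfl, hRel', hΞ'⟩ :=
        match_cons_nonatomic (fun h => by cases h) hM
      have hM₁ : Match Θr (Θ'' + Ξ) := by
        have hM₂ := match_rebuild (N := 0) hRel' hΞ'
          (by intro a b hm
              rcases Multiset.mem_cons.mp hm with he | hm'
              · exact absurd he (by simp)
              · exact Multiset.mem_add.mpr (Or.inr hm'))
          (by intro C' hm hat
              rcases Multiset.mem_cons.mp hm with rfl | hm'
              · cases hat
              · exact Multiset.mem_add.mpr (Or.inr hm'))
          (by intro a b hm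
              rcases Multiset.mem_cons.mp hm with he | hm'
              · exact absurd he (by simp)
              · simp only [Multiset.mem_add] at hm' ⊢
                tauto)
        rwa [zero_add, zero_add] at hM₂
      have hM₃ : Match (B ::ₘ Θr) (B ::ₘ (Θ'' + Ξ)) := match_extend_cons hM₁ B
      obtain ⟨k₁, d₁⟩ := ih₁ _ hM₁
      obtain ⟨k₂, d₂⟩ := ih₂ _ hM₃
      exact ⟨max k₁ k₂ + 1, DerC.impL (derC_mono d₁ (le_max_left _ _))
        (derC_mono d₂ (le_max_right _ _))⟩
  | @impR n Γ Δ A B h₁ ih =>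
      intro Θ hM
      obtain ⟨k, d⟩ := ih _ (match_extend_cons hM A)
      exact ⟨k + 1, DerC.impR d⟩
  | @allL n Γ Δ x t A hf hprem ih =>
      intro Θ hM
      obtain ⟨Θr, Θ'', Ξ, hΘ, -, -, -⟩ := match_cons_nonatomic (fun h => by cases h) hM
      obtain ⟨k, d⟩ := ih _ (match_extend_cons hM (A.subst x t))
      rw [hΘ] at d ⊢
      exact ⟨k + 1, DerC.allL hf d⟩
  | @allR n Γ Δ x y A hf hy hΓ hΔ hprem ih =>
      intro Θ hM
      obtain ⟨k, d⟩ := ih Θ hM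
      exact ⟨k + 1, DerC.allR hf hy (match_fresh hM hΓ) hΔ d⟩
  | @exL n Γ Δ x y A hf hy hΓ hΔ hprem ih =>
      intro Θ hM
      obtain ⟨Θr, Θ'', Ξ, rfl, rfl, hRel', hΞ'⟩ :=
        match_cons_nonatomic (fun h => by cases h) hM
      have hM₂ := match_rebuild (N := A.subst x (Term.var y) ::ₘ 0) hRel' hΞ'
        (by intro a b hm
            rcases Multiset.mem_cons.mp hm with he | hm'
            · exact absurd he (by simp)
            · exact Multiset.mem_add.mpr (Or.inr hm'))
        (by intro C' hm hat
            rcases Multiset.mem_cons.mp hm with rfl | hm'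
            · cases hat
            · exact Multiset.mem_add.mpr (Or.inr hm'))
        (by intro a b hm
            rcases Multiset.mem_cons.mp hm with he | hm'
            · exact absurd he (by simp)
            · simp only [Multiset.mem_add] at hm' ⊢
              simp only [Multiset.mem_cons]
              tauto)
      have e₁ : (A.subst x (Term.var y) ::ₘ 0) + Θr = A.subst x (Term.var y) ::ₘ Θr := by
        simp [Multiset.cons_add]
      have e₂ : (A.subst x (Term.var y) ::ₘ 0) + Θ'' + Ξ
          = A.subst x (Term.var y) ::ₘ (Θ'' + Ξ) := by simp [Multiset.cons_add]
      rw [e₁, e₂] at hM₂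
      obtain ⟨k, d⟩ := ih _ hM₂
      have hfresh : ∀ C ∈ Fm.ex x A ::ₘ Θr, y ∉ Fm.freeVars C := by
        refine match_fresh hM fun C hC => ?_
        rcases Multiset.mem_cons.mp hC with rfl | hC'
        · exact hy
        · exact hΓ C hC'
      exact ⟨k + 1, DerC.exL hf hy
        (fun C hC => hfresh C (Multiset.mem_cons_of_mem hC)) hΔ d⟩
  | @exR n Γ Δ x t A hf hprem ih =>
      intro Θ hM
      obtain ⟨k, d⟩ := ih Θ hM
      exact ⟨k + 1, DerC.exR hf d⟩
  | @ref n Γ Δ t hprem ih =>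
      intro Θ hM
      exact ih Θ (match_add_xi hM (Or.inl ⟨t, t, rfl, TmEq.refl t⟩))
  | @repl n Γp Γc Δ hrp hprem ih =>
      intro Θ hM
      obtain ⟨s', r', w, P, Γ₀, hPat, hs, hr, h1, hΓp, hΓc⟩ := hrp
      subst hΓp hΓc
      have htm : TmEq Θ s' r' := match_eq_tmEq hM (Multiset.mem_cons_self _ _)
      have hFF' : CompEq Θ (P.subst w s') (P.subst w r') := compEq_subst hPat h1 htm
      rw [Multiset.cons_swap] at hM
      have hM₂ := match_replace hM hFF'
        (by intro y hy
            rcases fv_subst_or hPat h1 hs y hy with hy' | hy'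
            · exact Or.inl hy'
            · exact Or.inr ⟨s', r', Multiset.mem_cons_of_mem (Multiset.mem_cons_self _ _), hy'⟩)
        (by rintro y ⟨a, b, hm, hy⟩
            rcases Multiset.mem_cons.mp hm with he | hm'
            · have hy₂ : y ∈ (P.subst w s').freeVars := he ▸ hy
              rcases fv_subst_or hPat h1 hs y hy₂ with hyy | hyy
              · rcases hFF' with ⟨t₁, t₂, t₁', t₂', he₁, he₂, hc₁, hc₂⟩ | ⟨l, R, ts, ts', hX, hYY, hcc⟩
                · refine ⟨t₁', t₂', ?_, ?_⟩
                  · rw [← he₂]; exact Multiset.mem_cons_self _ _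
                  · rw [← he₂]; exact hyy
                · exact absurd (he.trans hX) (by simp)
              · exact ⟨s', r', Multiset.mem_cons_of_mem (Multiset.mem_cons_self _ _), hyy⟩
            · exact ⟨a, b, Multiset.mem_cons_of_mem hm', hy⟩)
      rw [Multiset.cons_swap] at hM₂
      exact ih Θ hM₂

end ReplAux

namespace ReplAux

open Fm

variable {L : FirstOrder.Language.{u, v}}

theorem tmEq_update {E : Multiset (Fm L)} {t : L.Term ℕ} {ρ : ℕ → L.Term ℕ} {z : ℕ}
    {y' : L.Term ℕ} (hxy : TmEq E (ρ z) y') (hcount : tCount z t ≤ 1) :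
    TmEq E (t.subst ρ) (t.subst (Function.update ρ z y')) := by
  rcases Nat.le_one_iff_eq_zero_or_eq_one.mp hcount with h0 | h1
  · have he : t.subst ρ = t.subst (Function.update ρ z y') := by
      refine tsubst_congr fun z' hz' => ?_
      have : z' ≠ z := by rintro rfl; exact hz' h0
      rw [Function.update_of_ne this]
    rw [he]
    exact .refl _
  · set w := max (maxVarT (t.subst ρ)) (max (maxVarT (ρ z)) (maxVarT y')) + 1 with hw
    have hfresh : tCount w (t.subst ρ) = 0 := tcount_eq_zero_of_gt (by omega)
    have hcond : ∀ z', tCount z' t ≠ 0 → z' ≠ z → tCount w (ρ z') = 0 :=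
      fun z' hz' _ => tcount_subst_mem hz' hfresh
    have hc : tCount w (t.subst (Function.update ρ z (Term.var w))) = 1 := by
      rw [tcount_subst_marker hcond, h1]
    have e₁ : (t.subst (Function.update ρ z (Term.var w))).subst
        (Function.update Term.var w (ρ z)) = t.subst ρ := by
      rw [tsubst_update_comp hcond, Function.update_eq_self]
    have e₂ : (t.subst (Function.update ρ z (Term.var w))).subst
        (Function.update Term.var w y') = t.subst (Function.update ρ z y') := by
      rw [tsubst_update_comp hcond]
    have := TmEq.congr (E := E) hxy hc
    rwa [e₁, e₂] at this

theorem tmEq_subst_chain {E : Multiset (Fm L)} (t : L.Term ℕ) :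
    ∀ (l : List ℕ) (ρ₁ ρ₂ : ℕ → L.Term ℕ), l.Nodup →
      (∀ z, z ∉ l → ρ₁ z = ρ₂ z) →
      (∀ z ∈ l, TmEq E (ρ₁ z) (ρ₂ z) ∧ tCount z t ≤ 1) →
      TmEq E (t.subst ρ₁) (t.subst ρ₂) := by
  intro l
  induction l with
  | nil =>
      intro ρ₁ ρ₂ _ hagree _
      have : t.subst ρ₁ = t.subst ρ₂ := tsubst_congr fun z _ => hagree z (by simp)
      rw [this]; exact .refl _
  | cons z l' ih =>
      intro ρ₁ ρ₂ hnd hagree hband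
      have hz : z ∈ z :: l' := by simp
      have step : TmEq E (t.subst ρ₁) (t.subst (Function.update ρ₁ z (ρ₂ z))) :=
        tmEq_update (hband z hz).1 (hband z hz).2
      refine step.trans (ih (Function.update ρ₁ z (ρ₂ z)) ρ₂ (List.Nodup.of_cons hnd) ?_ ?_)
      · intro z' hz'
        by_cases hzz : z' = z
        · subst hzz; rw [Function.update_self]
        · rw [Function.update_of_ne hzz]
          exact hagree z' (by simp [hz', hzz])
      · intro z' hz'
        have hzz : z' ≠ z := by
          rintro rfl
          exact (List.nodup_cons.mp hnd).1 hz'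
        rw [Function.update_of_ne hzz]
        exact hband z' (List.mem_cons_of_mem _ hz')

end ReplAux

open ReplAux in
/-- Generalized admissibility of multiple simultaneous replacement in `G3c₁^=⁻`:
if `A` is atomic, the variables `u₁, …, uₙ, v` are pairwise distinct, each occurs
exactly once in `A` and none of them occurs in the terms `q₁, …, qₙ, p₁, …, pₙ, s, r`,
and `q₁ = p₁, …, qₙ = pₙ, s = r, A[u⃗/q⃗, v/s], A[u⃗/p⃗, v/r], Γ ⇒ Δ` is derivable, then
`q₁ = p₁, …, qₙ = pₙ, s = r, A[u⃗/q⃗, v/s], Γ ⇒ Δ` is derivable.  Here the simultaneous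
substitutions `[u⃗/q⃗, v/s]` and `[u⃗/p⃗, v/r]` are represented by maps `σ`, `τ` that send
`uᵢ` to `qᵢ` (resp. `pᵢ`), `v` to `s` (resp. `r`), and every other variable to itself. -/
theorem generalized_repl_admissible_G3c1EqMinus (L : FirstOrder.Language.{u, v})
    (m : ℕ) (A : Fm L) (hA : A.IsAtomic)
    (uu : Fin m → ℕ) (v : ℕ) (huinj : Function.Injective uu) (huv : ∀ i, uu i ≠ v)
    (hu1 : ∀ i, Fm.fCount (uu i) A = 1) (hv1 : Fm.fCount v A = 1)
    (q p : Fin m → L.Term ℕ) (s r : L.Term ℕ)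
    (hu_occ : ∀ i, (∀ j, tCount (uu i) (q j) = 0 ∧ tCount (uu i) (p j) = 0) ∧
      tCount (uu i) s = 0 ∧ tCount (uu i) r = 0)
    (hv_occ : (∀ j, tCount v (q j) = 0 ∧ tCount v (p j) = 0) ∧
      tCount v s = 0 ∧ tCount v r = 0)
    (σ τ : ℕ → L.Term ℕ)
    (hσv : σ v = s) (hσu : ∀ i, σ (uu i) = q i)
    (hσ : ∀ w, w ≠ v → (∀ i, w ≠ uu i) → σ w = Term.var w)
    (hτv : τ v = r) (hτu : ∀ i, τ (uu i) = p i)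
    (hτ : ∀ w, w ≠ v → (∀ i, w ≠ uu i) → τ w = Term.var w)
    (Γ Δ : Multiset (Fm L))
    (hd : ∃ k, DerC (ReplMinus1 L) k
      (((Finset.univ : Finset (Fin m)).val.map fun i => Fm.equal (q i) (p i)) +
        (Fm.equal s r ::ₘ A.ssub σ ::ₘ A.ssub τ ::ₘ Γ)) Δ) :
    ∃ k, DerC (ReplMinus1 L) k
      (((Finset.univ : Finset (Fin m)).val.map fun i => Fm.equal (q i) (p i)) +
        (Fm.equal s r ::ₘ A.ssub σ ::ₘ Γ)) Δ := by
  obtain ⟨k, d⟩ := hd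
  set E : Multiset (Fm L) :=
    (Finset.univ : Finset (Fin m)).val.map fun i => Fm.equal (q i) (p i) with hE
  set Θfin : Multiset (Fm L) := E + (Fm.equal s r ::ₘ A.ssub σ ::ₘ Γ) with hΘfin
  have hmem_sr : Fm.equal s r ∈ Θfin := by
    rw [hΘfin]
    exact Multiset.mem_add.mpr (Or.inr (Multiset.mem_cons_self _ _))
  have hmem_qp : ∀ i : Fin m, Fm.equal (q i) (p i) ∈ Θfin := by
    intro i
    rw [hΘfin, hE]
    exact Multiset.mem_add.mpr (Or.inl (Multiset.mem_map.mpr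
      ⟨i, Finset.mem_val.mpr (Finset.mem_univ i), rfl⟩))
  have hmem_Aσ : A.ssub σ ∈ Θfin := by
    rw [hΘfin]
    exact Multiset.mem_add.mpr (Or.inr (Multiset.mem_cons_of_mem (Multiset.mem_cons_self _ _)))
  set lvars : List ℕ := v :: List.ofFn uu with hlvars
  have hnd : lvars.Nodup := by
    rw [hlvars]
    refine List.nodup_cons.mpr ⟨?_, List.nodup_ofFn.mpr huinj⟩
    intro hv
    obtain ⟨i, hi⟩ := (List.mem_ofFn (f := uu) (a := v)).mp hv
    exact huv i hi
  have chain : ∀ t : L.Term ℕ, (∀ z ∈ lvars, tCount z t ≤ 1) →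
      TmEq Θfin (t.subst σ) (t.subst τ) := by
    intro t hcnt
    refine tmEq_subst_chain t lvars σ τ hnd ?_ ?_
    · intro z hz
      rw [hlvars] at hz
      have hzv : z ≠ v := fun h => hz (h ▸ List.mem_cons_self)
      have hzu : ∀ i, z ≠ uu i := by
        intro i h
        exact hz (List.mem_cons_of_mem _ ((List.mem_ofFn (f := uu) (a := z)).mpr ⟨i, h.symm⟩))
      rw [hσ z hzv hzu, hτ z hzv hzu]
    · intro z hz
      refine ⟨?_, hcnt z hz⟩
      rw [hlvars] at hz
      rcases List.mem_cons.mp hz with rfl | hz'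
      · rw [hσv, hτv]; exact .base hmem_sr
      · obtain ⟨i, rfl⟩ := (List.mem_ofFn (f := uu) (a := z)).mp hz'
        rw [hσu i, hτu i]; exact .base (hmem_qp i)
  have hAA : CompEq Θfin (A.ssub σ) (A.ssub τ) := by
    cases hA with
    | equal t₁ t₂ =>
        have hb : ∀ z ∈ lvars, tCount z t₁ ≤ 1 ∧ tCount z t₂ ≤ 1 := by
          intro z hz
          rw [hlvars] at hz
          rcases List.mem_cons.mp hz with rfl | hz'
          · simp only [Fm.fCount] at hv1; omega
          · obtain ⟨i, rfl⟩ := (List.mem_ofFn (f := uu) (a := z)).mp hz'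
            have := hu1 i
            simp only [Fm.fCount] at this
            omega
        exact Or.inl ⟨_, _, _, _, rfl, rfl, chain t₁ (fun z hz => (hb z hz).1),
          chain t₂ (fun z hz => (hb z hz).2)⟩
    | rel R ts =>
        refine Or.inr ⟨_, _, _, _, rfl, rfl, fun i => chain (ts i) ?_⟩
        intro z hz
        have hsum : ∀ z₀ : ℕ, Fm.fCount z₀ (Fm.rel R ts) = 1 → tCount z₀ (ts i) ≤ 1 := by
          intro z₀ h₀
          simp only [Fm.fCount] at h₀
          calc tCount z₀ (ts i) ≤ Finset.univ.sum fun j => tCount z₀ (ts j) :=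
                Finset.single_le_sum (f := fun j => tCount z₀ (ts j))
                  (fun _ _ => Nat.zero_le _) (Finset.mem_univ i)
          _ ≤ 1 := le_of_eq h₀
        rw [hlvars] at hz
        rcases List.mem_cons.mp hz with rfl | hz'
        · exact hsum z hv1
        · obtain ⟨j, rfl⟩ := (List.mem_ofFn (f := uu) (a := z)).mp hz'
          exact hsum _ (hu1 j)
  have hM : Match Θfin (E + (Fm.equal s r ::ₘ A.ssub σ ::ₘ A.ssub τ ::ₘ Γ)) := by
    refine ⟨Θfin, A.ssub τ ::ₘ 0, ?_,
      Multiset.rel_refl_of_refl_on fun X _ => pairOK_refl _ _ X, ?_⟩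
    · rw [hΘfin]
      simp only [Multiset.add_cons]
      rw [add_zero]
      exact rot3 (Fm.equal s r) (A.ssub σ) (A.ssub τ) (E + Γ)
    · intro X hX
      rcases Multiset.mem_cons.mp hX with rfl | hX'
      · exact Or.inr ⟨A.ssub σ, hmem_Aσ, hAA⟩
      · exact absurd hX' (by simp)
  exact mega d Θfin hM
end

section
/- The rule Repl is admissible in G3c^=⁻: for every atomic formula P, terms s and r, variable v not occurring in s or r, and finite multisets Γ, Δ of formulas, if the sequent s = r, P[v/s], P[v/r], Γ ⇒ Δ is derivable in G3c^=⁻, then the sequent s = r, P[v/s], Γ ⇒ Δ is derivable in G3c^=⁻. -/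
open FirstOrder Language Multiset

universe u v

variable {L : FirstOrder.Language.{u, v}}

section Aux

noncomputable instance : DecidableEq (Fm L) := Classical.decEq _

/-! ### Term-level lemmas -/

theorem tCount_var {z w : ℕ} : tCount z (Term.var w : L.Term ℕ) = if w = z then 1 else 0 := rfl

theorem tCount_func {z : ℕ} {l} {f : L.Functions l} {ts : Fin l → L.Term ℕ} :
    tCount z (Term.func f ts) = Finset.univ.sum fun i => tCount z (ts i) := rfl

theorem subst_var' {σ : ℕ → L.Term ℕ} {w : ℕ} : (Term.var w : L.Term ℕ).subst σ = σ w := rfl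

theorem subst_func' {σ : ℕ → L.Term ℕ} {l} {f : L.Functions l} {ts : Fin l → L.Term ℕ} :
    (Term.func f ts).subst σ = Term.func f fun i => (ts i).subst σ := rfl

/-- a fresh variable exists for any finite family of terms -/
theorem exists_bound (t : L.Term ℕ) : ∃ B, ∀ z, B ≤ z → tCount z t = 0 := by
  induction t with
  | var w => exact ⟨w + 1, fun z hz => by simp [tCount_var]; omega⟩
  | func f ts ih =>
    choose Bs hBs using ih
    refine ⟨Finset.univ.sup Bs, fun z hz => ?_⟩
    rw [tCount_func]
    exact Finset.sum_eq_zero fun i _ => hBs i z (le_trans (Finset.le_sup (Finset.mem_univ i)) hz)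

theorem exists_fresh (s r : L.Term ℕ) : ∃ z, tCount z s = 0 ∧ tCount z r = 0 := by
  obtain ⟨B₁, h₁⟩ := exists_bound s
  obtain ⟨B₂, h₂⟩ := exists_bound r
  exact ⟨max B₁ B₂, h₁ _ (le_max_left _ _), h₂ _ (le_max_right _ _)⟩

/-- identity substitution on a term not containing the variable -/
theorem subst_id_of_tCount_eq_zero {z : ℕ} {u : L.Term ℕ} {t : L.Term ℕ}
    (h : tCount z t = 0) : t.subst (Function.update Term.var z u) = t := by
  induction t with
  | var w =>
    have hw : w ≠ z := by intro hwz; rw [tCount_var, if_pos hwz] at h; exact one_ne_zero h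
    simp [subst_var', Function.update_of_ne hw]
  | func f ts ih =>
    rw [subst_func']
    congr 1
    funext i
    refine ih i ?_
    rw [tCount_func] at h
    exact Finset.sum_eq_zero_iff.mp h i (Finset.mem_univ i)

/-- occurrences of a variable fixed by the substitution survive -/
theorem tCount_subst_ne_zero {z : ℕ} {σ : ℕ → L.Term ℕ} (hσ : σ z = Term.var z)
    {t : L.Term ℕ} (h : tCount z t ≠ 0) : tCount z (t.subst σ) ≠ 0 := by
  induction t with
  | var w =>
    by_cases hw : w = z
    · subst hw; rw [subst_var', hσ]; simp [tCount_var]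
    · simp [tCount_var, hw] at h
  | func f ts ih =>
    rw [tCount_func] at h
    rw [subst_func', tCount_func]
    intro hc
    apply h
    refine Finset.sum_eq_zero fun i _ => ?_
    by_contra hi
    exact (ih i hi) (Finset.sum_eq_zero_iff.mp hc i (Finset.mem_univ i))

/-- variables of `t[v/b]` are variables of `t[v/a]` or variables of `b` -/
theorem tCount_subst_cases {z v : ℕ} {a b : L.Term ℕ} {t : L.Term ℕ}
    (h : tCount z (t.subst (Function.update Term.var v b)) ≠ 0) :
    tCount z (t.subst (Function.update Term.var v a)) ≠ 0 ∨ tCount z b ≠ 0 := by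
  induction t with
  | var w =>
    by_cases hw : w = v
    · subst hw; rw [subst_var', Function.update_self] at h; exact Or.inr h
    · rw [subst_var', Function.update_of_ne hw] at h
      rw [subst_var', Function.update_of_ne hw]
      exact Or.inl h
  | func f ts ih =>
    rw [subst_func', tCount_func] at h
    have : ∃ i ∈ Finset.univ, tCount z ((ts i).subst (Function.update Term.var v b)) ≠ 0 := by
      by_contra hc
      push_neg at hc
      exact h (Finset.sum_eq_zero hc)
    obtain ⟨i, -, hi⟩ := this
    rcases ih i hi with h' | h'
    · left
      rw [subst_func', tCount_func]
      intro hc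
      exact h' (Finset.sum_eq_zero_iff.mp hc i (Finset.mem_univ i))
    · exact Or.inr h'

end Aux
section Aux2

namespace Fm

theorem subst_falsum {v : ℕ} {t : L.Term ℕ} : (falsum : Fm L).subst v t = falsum := rfl

theorem subst_equal {v : ℕ} {t t₁ t₂ : L.Term ℕ} :
    (equal t₁ t₂ : Fm L).subst v t =
      equal (t₁.subst (Function.update Term.var v t)) (t₂.subst (Function.update Term.var v t)) := rfl

theorem subst_rel {v : ℕ} {t : L.Term ℕ} {l} {R : L.Relations l} {ts : Fin l → L.Term ℕ} :
    (rel R ts : Fm L).subst v t = rel R fun i => (ts i).subst (Function.update Term.var v t) := rfl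

theorem IsAtomic.subst {P : Fm L} (hP : P.IsAtomic) (v : ℕ) (t : L.Term ℕ) :
    (P.subst v t).IsAtomic := by
  cases hP with
  | equal t₁ t₂ => rw [subst_equal]; exact IsAtomic.equal _ _
  | rel R ts => rw [subst_rel]; exact IsAtomic.rel _ _

theorem not_isAtomic_falsum : ¬ (falsum : Fm L).IsAtomic := fun h => nomatch h
theorem not_isAtomic_and {A B : Fm L} : ¬ (and A B).IsAtomic := fun h => nomatch h
theorem not_isAtomic_or {A B : Fm L} : ¬ (or A B).IsAtomic := fun h => nomatch h
theorem not_isAtomic_imp {A B : Fm L} : ¬ (imp A B).IsAtomic := fun h => nomatch h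
theorem not_isAtomic_all {x : ℕ} {A : Fm L} : ¬ (all x A).IsAtomic := fun h => nomatch h
theorem not_isAtomic_ex {x : ℕ} {A : Fm L} : ¬ (ex x A).IsAtomic := fun h => nomatch h

theorem IsAtomic.subst_ne_falsum {P : Fm L} (hP : P.IsAtomic) (v : ℕ) (t : L.Term ℕ) :
    P.subst v t ≠ falsum := by
  intro h
  exact not_isAtomic_falsum (h ▸ hP.subst v t)

theorem subst_eq_equal {P : Fm L} (hP : P.IsAtomic) {v : ℕ} {b : L.Term ℕ} {s r : L.Term ℕ}
    (h : P.subst v b = equal s r) :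
    ∃ u₁ u₂, P = equal u₁ u₂ ∧ s = u₁.subst (Function.update Term.var v b) ∧
      r = u₂.subst (Function.update Term.var v b) := by
  cases hP with
  | equal t₁ t₂ =>
    rw [subst_equal] at h
    injection h with h₁ h₂
    exact ⟨t₁, t₂, rfl, h₁.symm, h₂.symm⟩
  | rel R ts => rw [subst_rel] at h; exact absurd h (by intro h; exact nomatch h)

theorem mem_freeVars_equal {z : ℕ} {t₁ t₂ : L.Term ℕ} :
    z ∈ (equal t₁ t₂ : Fm L).freeVars ↔ (tCount z t₁ ≠ 0 ∨ tCount z t₂ ≠ 0) := Iff.rfl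

theorem mem_freeVars_rel {z : ℕ} {l} {R : L.Relations l} {ts : Fin l → L.Term ℕ} :
    z ∈ (rel R ts : Fm L).freeVars ↔ ∃ i, tCount z (ts i) ≠ 0 := Iff.rfl

/-- variables of `P[v/b]` are variables of `P[v/a]` or of `b`, for atomic `P` -/
theorem mem_freeVars_subst_cases {P : Fm L} (hP : P.IsAtomic) {z v : ℕ} {a b : L.Term ℕ}
    (h : z ∈ (P.subst v b).freeVars) :
    z ∈ (P.subst v a).freeVars ∨ tCount z b ≠ 0 := by
  cases hP with
  | equal t₁ t₂ =>
    rw [subst_equal, mem_freeVars_equal] at h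
    rw [subst_equal, mem_freeVars_equal]
    rcases h with h | h
    · rcases tCount_subst_cases h with h' | h'
      · exact Or.inl (Or.inl h')
      · exact Or.inr h'
    · rcases tCount_subst_cases h with h' | h'
      · exact Or.inl (Or.inr h')
      · exact Or.inr h'
  | rel R ts =>
    rw [subst_rel, mem_freeVars_rel] at h
    rw [subst_rel, mem_freeVars_rel]
    obtain ⟨i, hi⟩ := h
    rcases tCount_subst_cases hi with h' | h'
    · exact Or.inl ⟨i, h'⟩
    · exact Or.inr h'

/-- free variables fixed by a substitution survive it -/
theorem mem_freeVars_ssub {z : ℕ} {A : Fm L} :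
    ∀ {σ : ℕ → L.Term ℕ}, σ z = Term.var z → z ∈ A.freeVars → z ∈ (A.ssub σ).freeVars := by
  induction A with
  | falsum => intro σ _ h; exact absurd h (by simp [freeVars])
  | equal t₁ t₂ =>
    intro σ hσ h
    rcases h with h | h
    · exact Or.inl (tCount_subst_ne_zero hσ h)
    · exact Or.inr (tCount_subst_ne_zero hσ h)
  | rel R ts =>
    intro σ hσ h
    obtain ⟨i, hi⟩ := h
    exact ⟨i, tCount_subst_ne_zero hσ hi⟩
  | and A B ihA ihB =>
    intro σ hσ h
    rcases h with h | h
    · exact Or.inl (ihA hσ h)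
    · exact Or.inr (ihB hσ h)
  | or A B ihA ihB =>
    intro σ hσ h
    rcases h with h | h
    · exact Or.inl (ihA hσ h)
    · exact Or.inr (ihB hσ h)
  | imp A B ihA ihB =>
    intro σ hσ h
    rcases h with h | h
    · exact Or.inl (ihA hσ h)
    · exact Or.inr (ihB hσ h)
  | all y A ihA =>
    intro σ hσ h
    obtain ⟨hA, hzy⟩ := h
    have hzy' : z ≠ y := hzy
    refine ⟨ihA ?_ hA, hzy'⟩
    rw [Function.update_of_ne hzy']
    exact hσ
  | ex y A ihA =>
    intro σ hσ h
    obtain ⟨hA, hzy⟩ := h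
    have hzy' : z ≠ y := hzy
    refine ⟨ihA ?_ hA, hzy'⟩
    rw [Function.update_of_ne hzy']
    exact hσ

theorem mem_freeVars_subst {z x : ℕ} {u : L.Term ℕ} {A : Fm L}
    (hzx : z ≠ x) (h : z ∈ A.freeVars) : z ∈ (A.subst x u).freeVars :=
  mem_freeVars_ssub (Function.update_of_ne hzx _ _) h

end Fm

end Aux2
section Aux3

open Multiset

/-- free variables of members of a multiset -/
def fvM (Θ : Multiset (Fm L)) : Set ℕ := {y | ∃ C ∈ Θ, y ∈ C.freeVars}

/-- free variables of atomic members of a multiset -/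
def fvA (Θ : Multiset (Fm L)) : Set ℕ := {y | ∃ C ∈ Θ, C.IsAtomic ∧ y ∈ C.freeVars}

theorem fvA_subset_fvM {Θ : Multiset (Fm L)} {y : ℕ} (h : y ∈ fvA Θ) : y ∈ fvM Θ := by
  obtain ⟨C, hC, _, hy⟩ := h
  exact ⟨C, hC, hy⟩

theorem fvM_mono {Θ Θ' : Multiset (Fm L)} (h : Θ ≤ Θ') {y : ℕ} (hy : y ∈ fvM Θ) : y ∈ fvM Θ' := by
  obtain ⟨C, hC, hyC⟩ := hy
  exact ⟨C, mem_of_le h hC, hyC⟩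

theorem fvA_mono {Θ Θ' : Multiset (Fm L)} (h : Θ ≤ Θ') {y : ℕ} (hy : y ∈ fvA Θ) : y ∈ fvA Θ' := by
  obtain ⟨C, hC, hA, hyC⟩ := hy
  exact ⟨C, mem_of_le h hC, hA, hyC⟩

/-- `Flip Θ X Y`: `Y` is obtained from `X` by a chain of replacements of terms `s`/`r`,
each justified by an equality `s = r` that is `Flip`-reachable from a member of `Θ`. -/
inductive Flip (Θ : Multiset (Fm L)) : Fm L → Fm L → Prop where
  | refl (F : Fm L) : Flip Θ F F
  | step {X P : Fm L} {v : ℕ} {s r a b : L.Term ℕ} (E : Fm L) :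
      Flip Θ X (P.subst v a) → P.IsAtomic → tCount v s = 0 → tCount v r = 0 →
      (a = s ∧ b = r ∨ a = r ∧ b = s) →
      E ∈ Θ → Flip Θ E (Fm.equal s r) → Flip Θ X (P.subst v b)

theorem Flip.mono {Θ Θ' : Multiset (Fm L)} (hle : Θ ≤ Θ') {X Y : Fm L} (h : Flip Θ X Y) :
    Flip Θ' X Y := by
  induction h with
  | refl F => exact Flip.refl F
  | step E h₁ hP hs hr hab hEΘ hEf ih₁ ih₂ =>
    exact Flip.step E ih₁ hP hs hr hab (mem_of_le hle hEΘ) ih₂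

theorem Flip.atomic_start {Θ : Multiset (Fm L)} {X Y : Fm L} (h : Flip Θ X Y) :
    X = Y ∨ X.IsAtomic := by
  induction h with
  | refl F => exact Or.inl rfl
  | step E h₁ hP _ _ _ _ _ ih₁ ih₂ =>
    rcases ih₁ with rfl | hX
    · exact Or.inr (hP.subst _ _)
    · exact Or.inr hX

theorem Flip.atomic_end {Θ : Multiset (Fm L)} {X Y : Fm L} (h : Flip Θ X Y)
    (hX : X.IsAtomic) : Y.IsAtomic := by
  cases h with
  | refl F => exact hX
  | step E _ hP _ _ _ _ _ => exact hP.subst _ _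

theorem Flip.eq_falsum' {Θ : Multiset (Fm L)} {X Y : Fm L} (h : Flip Θ X Y)
    (hY : Y = Fm.falsum) : X = Fm.falsum := by
  cases h with
  | refl F => exact hY
  | step E _ hP _ _ _ _ _ => exact absurd hY (hP.subst_ne_falsum _ _)

theorem Flip.eq_falsum {Θ : Multiset (Fm L)} {X : Fm L} (h : Flip Θ X Fm.falsum) :
    X = Fm.falsum := h.eq_falsum' rfl

end Aux3
section Aux4

open Multiset

theorem Flip.drop_nonatomic {C : Fm L} {Θ₀ : Multiset (Fm L)} (hC : ¬ C.IsAtomic)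
    {X Y : Fm L} (h : Flip (C ::ₘ Θ₀) X Y) : Flip Θ₀ X Y := by
  induction h with
  | refl F => exact Flip.refl F
  | step E h₁ hP hs hr hab hEΘ hEf ih₁ ih₂ =>
    refine Flip.step E ih₁ hP hs hr hab ?_ ih₂
    rcases mem_cons.mp hEΘ with rfl | hE
    · exfalso
      rcases hEf.atomic_start with rfl | hA
      · exact hC (Fm.IsAtomic.equal _ _)
      · exact hC hA
    · exact hE

/-- free variables along a Flip chain stay within the original plus the context -/
theorem Flip.freeVars_subset {Θ : Multiset (Fm L)} {X Y : Fm L} (h : Flip Θ X Y) :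
    ∀ z ∈ Y.freeVars, z ∈ X.freeVars ∨ z ∈ fvA Θ := by
  induction h with
  | refl F => exact fun z hz => Or.inl hz
  | step E h₁ hP hs hr hab hEΘ hEf ih₁ ih₂ =>
    intro z hz
    rcases Fm.mem_freeVars_subst_cases hP hz with hz' | hz'
    · exact ih₁ z hz'
    · rcases ih₂ z (Fm.mem_freeVars_equal.mpr (by
        rcases hab with ⟨rfl, rfl⟩ | ⟨rfl, rfl⟩
        · exact Or.inr hz'
        · exact Or.inl hz')) with hE | hM
      · have hEA : E.IsAtomic := by
          rcases hEf.atomic_start with rfl | hA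
          · exact Fm.IsAtomic.equal _ _
          · exact hA
        exact Or.inr ⟨E, hEΘ, hEA, hE⟩
      · exact Or.inr hM

theorem DerC.mono {rp : Multiset (Fm L) → Multiset (Fm L) → Prop} {n : ℕ}
    {Γ Δ : Multiset (Fm L)} (h : DerC rp n Γ Δ) :
    ∀ n', n ≤ n' → DerC rp n' Γ Δ := by
  induction h with
  | ax hP => exact fun n' _ => DerC.ax hP
  | botL => exact fun n' _ => DerC.botL
  | andL h ih =>
    rintro (_ | n') hn
    · omega
    · exact DerC.andL (ih n' (by omega))
  | andR h₁ h₂ ih₁ ih₂ =>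
    rintro (_ | n') hn
    · omega
    · exact DerC.andR (ih₁ n' (by omega)) (ih₂ n' (by omega))
  | orL h₁ h₂ ih₁ ih₂ =>
    rintro (_ | n') hn
    · omega
    · exact DerC.orL (ih₁ n' (by omega)) (ih₂ n' (by omega))
  | orR h ih =>
    rintro (_ | n') hn
    · omega
    · exact DerC.orR (ih n' (by omega))
  | impL h₁ h₂ ih₁ ih₂ =>
    rintro (_ | n') hn
    · omega
    · exact DerC.impL (ih₁ n' (by omega)) (ih₂ n' (by omega))
  | impR h ih =>
    rintro (_ | n') hn
    · omega
    · exact DerC.impR (ih n' (by omega))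
  | allL hf h ih =>
    rintro (_ | n') hn
    · omega
    · exact DerC.allL hf (ih n' (by omega))
  | allR hf hy hΓ hΔ h ih =>
    rintro (_ | n') hn
    · omega
    · exact DerC.allR hf hy hΓ hΔ (ih n' (by omega))
  | exL hf hy hΓ hΔ h ih =>
    rintro (_ | n') hn
    · omega
    · exact DerC.exL hf hy hΓ hΔ (ih n' (by omega))
  | exR hf h ih =>
    rintro (_ | n') hn
    · omega
    · exact DerC.exR hf (ih n' (by omega))
  | ref t h ih =>
    rintro (_ | n') hn
    · omega
    · exact DerC.ref t (ih n' (by omega))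
  | repl hrp h ih =>
    rintro (_ | n') hn
    · omega
    · exact DerC.repl hrp (ih n' (by omega))

/-- locate an element of a multiset written as a sum -/
theorem cons_eq_add_cases {α : Type*} [DecidableEq α] {a : α} {Γ S T : Multiset α}
    (h : a ::ₘ Γ = S + T) :
    (a ∈ S ∧ Γ = S.erase a + T) ∨ (a ∈ T ∧ Γ = S + T.erase a) := by
  have ha : a ∈ S + T := h ▸ mem_cons_self a Γ
  rcases mem_add.mp ha with hS | hT
  · left
    refine ⟨hS, ?_⟩
    have : a ::ₘ Γ = a ::ₘ (S.erase a + T) := by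
      rw [← cons_add, cons_erase hS] at *
      exact h
    exact (cons_inj_right a).mp this
  · right
    refine ⟨hT, ?_⟩
    have : a ::ₘ Γ = a ::ₘ (S + T.erase a) := by
      conv_rhs => rw [add_comm, ← cons_add, cons_erase hT, add_comm]
      exact h
    exact (cons_inj_right a).mp this

theorem map_erase_cons {α β : Type*} [DecidableEq α] {p : α} {m : Multiset α} (hp : p ∈ m)
    (f : α → β) : m.map f = f p ::ₘ (m.erase p).map f := by
  conv_lhs => rw [← cons_erase hp]
  rw [map_cons]

end Aux4
section Aux5

open Multiset

namespace Fm
theorem freeVars_falsum : (falsum : Fm L).freeVars = ∅ := rfl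
theorem freeVars_and {A B : Fm L} : (and A B).freeVars = A.freeVars ∪ B.freeVars := rfl
theorem freeVars_or {A B : Fm L} : (or A B).freeVars = A.freeVars ∪ B.freeVars := rfl
theorem freeVars_imp {A B : Fm L} : (imp A B).freeVars = A.freeVars ∪ B.freeVars := rfl
theorem freeVars_all {x : ℕ} {A : Fm L} : (all x A).freeVars = A.freeVars \ {x} := rfl
theorem freeVars_ex {x : ℕ} {A : Fm L} : (ex x A).freeVars = A.freeVars \ {x} := rfl
end Fm

theorem mem_fvA_cons {z : ℕ} {C : Fm L} {Γ : Multiset (Fm L)} :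
    z ∈ fvA (C ::ₘ Γ) ↔ (C.IsAtomic ∧ z ∈ C.freeVars) ∨ z ∈ fvA Γ := by
  constructor
  · rintro ⟨D, hD, hDA, hz⟩
    rcases mem_cons.mp hD with rfl | hD'
    · exact Or.inl ⟨hDA, hz⟩
    · exact Or.inr ⟨D, hD', hDA, hz⟩
  · rintro (⟨hCA, hz⟩ | ⟨D, hD, hDA, hz⟩)
    · exact ⟨C, mem_cons_self _ _, hCA, hz⟩
    · exact ⟨D, mem_cons_of_mem hD, hDA, hz⟩

theorem fvA_cons_mono {z : ℕ} {C : Fm L} {Γ : Multiset (Fm L)} (h : z ∈ fvA Γ) :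
    z ∈ fvA (C ::ₘ Γ) := fvA_mono (le_cons_self _ _) h

/-- variables of atoms in the conclusion of Repl⁻ occur in atoms of the premiss -/
theorem fvA_repl {z : ℕ} {s r : L.Term ℕ} {v : ℕ} {P : Fm L} (hP : P.IsAtomic)
    {Γ : Multiset (Fm L)}
    (h : z ∈ fvA (Fm.equal s r ::ₘ P.subst v s ::ₘ Γ)) :
    z ∈ fvA (Fm.equal s r ::ₘ P.subst v r ::ₘ Γ) := by
  rw [mem_fvA_cons, mem_fvA_cons] at h ⊢
  rcases h with h | h | h
  · exact Or.inl h
  · obtain ⟨-, hz⟩ := h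
    rcases Fm.mem_freeVars_subst_cases hP (a := r) hz with hz' | hz'
    · exact Or.inr (Or.inl ⟨hP.subst v r, hz'⟩)
    · exact Or.inl ⟨Fm.IsAtomic.equal _ _, Fm.mem_freeVars_equal.mpr (Or.inl hz')⟩
  · exact Or.inr (Or.inr h)

/-- weakening by a formula whose free variables occur in atoms of the antecedent -/
theorem DerC.wkSub {n : ℕ} {Γ Δ : Multiset (Fm L)}
    (d : DerC (ReplMinus L) n Γ Δ) :
    ∀ {W : Fm L}, (∀ z ∈ W.freeVars, z ∈ fvA Γ) → DerC (ReplMinus L) n (W ::ₘ Γ) Δ := by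
  induction d with
  | @ax n Γ₀ Δ₀ P hP =>
    intro W hW
    rw [cons_swap]
    exact DerC.ax hP
  | botL =>
    intro W hW
    rw [cons_swap]
    exact DerC.botL
  | @andL n Γ₀ Δ₀ A B h ih =>
    intro W hW
    have h' := ih (W := W) (fun z hz => by
      rcases mem_fvA_cons.mp (hW z hz) with ⟨hA, -⟩ | h'
      · exact absurd hA Fm.not_isAtomic_and
      · exact fvA_cons_mono (fvA_cons_mono h'))
    rw [cons_swap W A, cons_swap W B] at h'
    rw [cons_swap]
    exact DerC.andL h'
  | @andR n Γ₀ Δ₀ A B h₁ h₂ ih₁ ih₂ =>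
    intro W hW
    exact DerC.andR (ih₁ hW) (ih₂ hW)
  | @orL n Γ₀ Δ₀ A B h₁ h₂ ih₁ ih₂ =>
    intro W hW
    have hW' : ∀ z ∈ W.freeVars, z ∈ fvA Γ₀ := fun z hz => by
      rcases mem_fvA_cons.mp (hW z hz) with ⟨hA, -⟩ | h'
      · exact absurd hA Fm.not_isAtomic_or
      · exact h'
    have h₁' := ih₁ (W := W) (fun z hz => fvA_cons_mono (hW' z hz))
    have h₂' := ih₂ (W := W) (fun z hz => fvA_cons_mono (hW' z hz))
    rw [cons_swap W A] at h₁'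
    rw [cons_swap W B] at h₂'
    rw [cons_swap]
    exact DerC.orL h₁' h₂'
  | @orR n Γ₀ Δ₀ A B h ih =>
    intro W hW
    exact DerC.orR (ih hW)
  | @impL n Γ₀ Δ₀ A B h₁ h₂ ih₁ ih₂ =>
    intro W hW
    have hW' : ∀ z ∈ W.freeVars, z ∈ fvA Γ₀ := fun z hz => by
      rcases mem_fvA_cons.mp (hW z hz) with ⟨hA, -⟩ | h'
      · exact absurd hA Fm.not_isAtomic_imp
      · exact h'
    have h₁' := ih₁ hW'
    have h₂' := ih₂ (W := W) (fun z hz => fvA_cons_mono (hW' z hz))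
    rw [cons_swap W B] at h₂'
    rw [cons_swap]
    exact DerC.impL h₁' h₂'
  | @impR n Γ₀ Δ₀ A B h ih =>
    intro W hW
    have h' := ih (W := W) (fun z hz => fvA_cons_mono (hW z hz))
    rw [cons_swap W A] at h'
    exact DerC.impR h'
  | @allL n Γ₀ Δ₀ x t A hf h ih =>
    intro W hW
    have hW' : ∀ z ∈ W.freeVars, z ∈ fvA (A.subst x t ::ₘ Fm.all x A ::ₘ Γ₀) :=
      fun z hz => fvA_cons_mono (hW z hz)
    have h' := ih hW'
    rw [cons_swap W (A.subst x t), cons_swap W (Fm.all x A)] at h'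
    rw [cons_swap]
    exact DerC.allL hf h'
  | @allR n Γ₀ Δ₀ x y A hf hy hΓ hΔ h ih =>
    intro W hW
    refine DerC.allR hf hy ?_ hΔ (ih hW)
    intro C hC
    rcases mem_cons.mp hC with rfl | hC'
    · intro hyC
      obtain ⟨D, hD, -, hyD⟩ := hW y hyC
      exact hΓ D hD hyD
    · exact hΓ C hC'
  | @exL n Γ₀ Δ₀ x y A hf hy hΓ hΔ h ih =>
    intro W hW
    have hW' : ∀ z ∈ W.freeVars, z ∈ fvA (A.subst x (Term.var y) ::ₘ Γ₀) := fun z hz => by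
      rcases mem_fvA_cons.mp (hW z hz) with ⟨hA, -⟩ | h'
      · exact absurd hA Fm.not_isAtomic_ex
      · exact fvA_cons_mono h'
    have h' := ih hW'
    rw [cons_swap W (A.subst x (Term.var y))] at h'
    rw [cons_swap]
    refine DerC.exL hf hy ?_ hΔ h'
    intro C hC
    rcases mem_cons.mp hC with rfl | hC'
    · intro hyC
      obtain ⟨D, hD, -, hyD⟩ := hW y hyC
      rcases mem_cons.mp hD with rfl | hD'
      · exact hy hyD
      · exact hΓ D hD' hyD
    · exact hΓ C hC'
  | @exR n Γ₀ Δ₀ x t A hf h ih =>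
    intro W hW
    exact DerC.exR hf (ih hW)
  | @ref n Γ₀ Δ₀ t h ih =>
    intro W hW
    have h' := ih (W := W) (fun z hz => fvA_cons_mono (hW z hz))
    rw [cons_swap W (Fm.equal t t)] at h'
    exact DerC.ref t h'
  | @repl n Γp Γc Δ₀ hrp h ih =>
    intro W hW
    obtain ⟨s, r, v, P, Γ₁, hP, hs, hr, rfl, rfl⟩ := hrp
    have h' := ih (W := W) (fun z hz => fvA_repl hP (hW z hz))
    rw [cons_swap W (Fm.equal s r), cons_swap W (P.subst v r)] at h'
    have : DerC (ReplMinus L) (n + 1) (Fm.equal s r ::ₘ P.subst v s ::ₘ W ::ₘ Γ₁) Δ₀ :=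
      DerC.repl ⟨s, r, v, P, W ::ₘ Γ₁, hP, hs, hr, rfl, rfl⟩ h'
    rw [cons_swap W (Fm.equal s r), cons_swap W (P.subst v s)]
    exact this
section Aux6

open Multiset

/-- helper: one replacement step on an extra antecedent formula, given that the
justifying equality can be removed again -/
theorem convStep {Θ Ω : Multiset (Fm L)} {P : Fm L} {v : ℕ} {s₂ r₂ a b : L.Term ℕ}
    (hP : P.IsAtomic) (hs2 : tCount v s₂ = 0) (hr2 : tCount v r₂ = 0)
    (hab : a = s₂ ∧ b = r₂ ∨ a = r₂ ∧ b = s₂)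
    (hrem : ∀ (Ω₂ : Multiset (Fm L)), Θ ≤ Ω₂ →
      (∀ ⦃Ξ : Multiset (Fm L)⦄ ⦃n : ℕ⦄,
          DerC (ReplMinus L) n (Fm.equal s₂ r₂ ::ₘ Ω₂) Ξ → ∃ m, DerC (ReplMinus L) m Ω₂ Ξ) ∧
      (∀ ⦃Ξ : Multiset (Fm L)⦄ ⦃n : ℕ⦄,
          DerC (ReplMinus L) n (Fm.equal r₂ s₂ ::ₘ Ω₂) Ξ → ∃ m, DerC (ReplMinus L) m Ω₂ Ξ))
    (hfv : ∀ z ∈ (Fm.equal s₂ r₂ : Fm L).freeVars, z ∈ fvA Θ)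
    (hle : Θ ≤ Ω) {Ξ : Multiset (Fm L)} {n : ℕ}
    (D : DerC (ReplMinus L) n (P.subst v b ::ₘ Ω) Ξ) :
    ∃ m, DerC (ReplMinus L) m (P.subst v a ::ₘ Ω) Ξ := by
  have hleA : Θ ≤ P.subst v a ::ₘ Ω := le_trans hle (le_cons_self _ _)
  rcases hab with ⟨rfl, rfl⟩ | ⟨rfl, rfl⟩
  · have D₁ : DerC (ReplMinus L) n (Fm.equal a b ::ₘ P.subst v b ::ₘ Ω) Ξ := by
      refine D.wkSub ?_
      intro z hz
      exact fvA_mono (le_trans hle (le_cons_self _ _)) (hfv z hz)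
    have D₂ : DerC (ReplMinus L) (n + 1) (Fm.equal a b ::ₘ P.subst v a ::ₘ Ω) Ξ :=
      DerC.repl ⟨a, b, v, P, Ω, hP, hs2, hr2, rfl, rfl⟩ D₁
    exact (hrem _ hleA).1 D₂
  · have D₁ : DerC (ReplMinus L) n (Fm.equal a b ::ₘ P.subst v b ::ₘ Ω) Ξ := by
      refine D.wkSub ?_
      intro z hz
      refine fvA_mono (le_trans hle (le_cons_self _ _)) (hfv z ?_)
      exact Fm.mem_freeVars_equal.mpr (Fm.mem_freeVars_equal.mp hz).symm
    have D₂ : DerC (ReplMinus L) (n + 1) (Fm.equal a b ::ₘ P.subst v a ::ₘ Ω) Ξ :=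
      DerC.repl ⟨a, b, v, P, Ω, hP, hr2, hs2, rfl, rfl⟩ D₁
    exact (hrem _ hleA).2 D₂

/-- an equality reachable from the antecedent by flips can be removed (both orientations) -/
theorem pasteEq {Θ : Multiset (Fm L)} {E G : Fm L} (fd : Flip Θ E G) :
    ∀ ⦃s r : L.Term ℕ⦄, G = Fm.equal s r → E ∈ Θ →
    ∀ ⦃Ω : Multiset (Fm L)⦄, Θ ≤ Ω →
      (∀ ⦃Ξ : Multiset (Fm L)⦄ ⦃n : ℕ⦄,
          DerC (ReplMinus L) n (Fm.equal s r ::ₘ Ω) Ξ → ∃ m, DerC (ReplMinus L) m Ω Ξ) ∧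
      (∀ ⦃Ξ : Multiset (Fm L)⦄ ⦃n : ℕ⦄,
          DerC (ReplMinus L) n (Fm.equal r s ::ₘ Ω) Ξ → ∃ m, DerC (ReplMinus L) m Ω Ξ) := by
  induction fd with
  | refl F =>
    rintro s r rfl hE Ω hle
    have hE' : (Fm.equal s r : Fm L) ∈ Ω := mem_of_le hle hE
    obtain ⟨z, hzs, hzr⟩ := exists_fresh s r
    constructor
    · intro Ξ n D
      -- Q := equal s (var z)
      have hsub_s : (Fm.equal s (Term.var z) : Fm L).subst z s = Fm.equal s s := by
        rw [Fm.subst_equal, subst_id_of_tCount_eq_zero hzs, subst_var', Function.update_self]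
      have hsub_r : (Fm.equal s (Term.var z) : Fm L).subst z r = Fm.equal s r := by
        rw [Fm.subst_equal, subst_id_of_tCount_eq_zero hzs, subst_var', Function.update_self]
      have hrepl : ReplMinus L
          (Fm.equal s r ::ₘ (Fm.equal s (Term.var z) : Fm L).subst z r ::ₘ Ω.erase (Fm.equal s r))
          (Fm.equal s r ::ₘ (Fm.equal s (Term.var z) : Fm L).subst z s ::ₘ Ω.erase (Fm.equal s r)) :=
        ⟨s, r, z, Fm.equal s (Term.var z), Ω.erase (Fm.equal s r), Fm.IsAtomic.equal _ _,
          hzs, hzr, rfl, rfl⟩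
      have hD' : DerC (ReplMinus L) n
          (Fm.equal s r ::ₘ (Fm.equal s (Term.var z) : Fm L).subst z r ::ₘ
            Ω.erase (Fm.equal s r)) Ξ := by
        rw [hsub_r, ← cons_swap, cons_erase hE']
        exact D
      have hD₂ := DerC.repl hrepl hD'
      rw [hsub_s] at hD₂
      refine ⟨n + 2, DerC.ref s ?_⟩
      rw [← cons_erase hE', cons_swap]
      exact hD₂
    · intro Ξ n D
      -- Q := equal (var z) s
      have hsub_s : (Fm.equal (Term.var z) s : Fm L).subst z s = Fm.equal s s := by
        rw [Fm.subst_equal, subst_id_of_tCount_eq_zero hzs, subst_var', Function.update_self]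
      have hsub_r : (Fm.equal (Term.var z) s : Fm L).subst z r = Fm.equal r s := by
        rw [Fm.subst_equal, subst_id_of_tCount_eq_zero hzs, subst_var', Function.update_self]
      have hrepl : ReplMinus L
          (Fm.equal s r ::ₘ (Fm.equal (Term.var z) s : Fm L).subst z r ::ₘ Ω.erase (Fm.equal s r))
          (Fm.equal s r ::ₘ (Fm.equal (Term.var z) s : Fm L).subst z s ::ₘ Ω.erase (Fm.equal s r)) :=
        ⟨s, r, z, Fm.equal (Term.var z) s, Ω.erase (Fm.equal s r), Fm.IsAtomic.equal _ _,
          hzs, hzr, rfl, rfl⟩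
      have hD' : DerC (ReplMinus L) n
          (Fm.equal s r ::ₘ (Fm.equal (Term.var z) s : Fm L).subst z r ::ₘ
            Ω.erase (Fm.equal s r)) Ξ := by
        rw [hsub_r, ← cons_swap, cons_erase hE']
        exact D
      have hD₂ := DerC.repl hrepl hD'
      rw [hsub_s] at hD₂
      refine ⟨n + 2, DerC.ref s ?_⟩
      rw [← cons_erase hE', cons_swap]
      exact hD₂
  | @step X P v s₂ r₂ a b E₂ h₁ hP hs2 hr2 hab hE₂ hEf₂ ih₁ ih₂ =>
    intro s r hG hE Ω hle
    obtain ⟨u₁, u₂, hPeq, hs, hr⟩ := Fm.subst_eq_equal hP hG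
    have hfv : ∀ z ∈ (Fm.equal s₂ r₂ : Fm L).freeVars, z ∈ fvA Θ := by
      intro z hz
      rcases hEf₂.freeVars_subset z hz with hzE | hzA
      · have hE₂A : E₂.IsAtomic := by
          rcases hEf₂.atomic_start with rfl | hA
          · exact Fm.IsAtomic.equal _ _
          · exact hA
        exact ⟨E₂, hE₂, hE₂A, hzE⟩
      · exact hzA
    have hrem := fun (Ω₂ : Multiset (Fm L)) (h : Θ ≤ Ω₂) => ih₂ rfl hE₂ h
    have hPa : P.subst v a = Fm.equal (u₁.subst (Function.update Term.var v a))
        (u₂.subst (Function.update Term.var v a)) := by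
      rw [hPeq, Fm.subst_equal]
    constructor
    · intro Ξ n D
      have D' : DerC (ReplMinus L) n (P.subst v b ::ₘ Ω) Ξ := by rw [hG]; exact D
      obtain ⟨m₁, D₁⟩ := convStep hP hs2 hr2 hab hrem hfv hle D'
      rw [hPa] at D₁
      exact (ih₁ hPa hE hle).1 D₁
    · intro Ξ n D
      have hP'b : (Fm.equal u₂ u₁ : Fm L).subst v b = Fm.equal r s := by
        rw [Fm.subst_equal, ← hs, ← hr]
      have D' : DerC (ReplMinus L) n ((Fm.equal u₂ u₁ : Fm L).subst v b ::ₘ Ω) Ξ := by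
        rw [hP'b]; exact D
      obtain ⟨m₁, D₁⟩ := convStep (Fm.IsAtomic.equal u₂ u₁) hs2 hr2 hab hrem hfv hle D'
      rw [show (Fm.equal u₂ u₁ : Fm L).subst v a = Fm.equal
        (u₂.subst (Function.update Term.var v a)) (u₁.subst (Function.update Term.var v a))
        from Fm.subst_equal] at D₁
      exact (ih₁ hPa hE hle).2 D₁

end Aux6
section Aux7

open Multiset

/-- chains of single replacements justified by equalities literally present in `Φ` -/
inductive Chain (Φ : Multiset (Fm L)) : Fm L → Fm L → Prop where
  | refl (F : Fm L) : Chain Φ F F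
  | step {X P : Fm L} {v : ℕ} {a b : L.Term ℕ} :
      Chain Φ X (P.subst v a) → P.IsAtomic → tCount v a = 0 → tCount v b = 0 →
      (Fm.equal a b) ∈ Φ → Chain Φ X (P.subst v b)

theorem Chain.conv {Φ : Multiset (Fm L)} {X Z : Fm L} (c : Chain Φ X Z) :
    ∀ ⦃Ξ : Multiset (Fm L)⦄ ⦃n : ℕ⦄, DerC (ReplMinus L) n (Z ::ₘ Φ) Ξ →
      ∃ m, DerC (ReplMinus L) m (X ::ₘ Φ) Ξ := by
  induction c with
  | refl => exact fun Ξ n D => ⟨n, D⟩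
  | @step P v a b c hP ha hb hmem ih =>
    intro Ξ n D
    have hPhi : Φ = Fm.equal a b ::ₘ Φ.erase (Fm.equal a b) := (cons_erase hmem).symm
    have D₁ : DerC (ReplMinus L) n
        (Fm.equal a b ::ₘ P.subst v b ::ₘ Φ.erase (Fm.equal a b)) Ξ := by
      rw [cons_swap, ← hPhi]
      exact D
    have D₂ : DerC (ReplMinus L) (n + 1)
        (Fm.equal a b ::ₘ P.subst v a ::ₘ Φ.erase (Fm.equal a b)) Ξ :=
      DerC.repl ⟨a, b, v, P, Φ.erase (Fm.equal a b), hP, ha, hb, rfl, rfl⟩ D₁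
    have D₃ : DerC (ReplMinus L) (n + 1) (P.subst v a ::ₘ Φ) Ξ := by
      rw [hPhi]
      rw [cons_swap] at D₂
      exact D₂
    exact ih D₃

/-- materializable equalities -/
def Mat (Θ : Multiset (Fm L)) (e : Fm L) : Prop :=
  ∃ E s r, E ∈ Θ ∧ Flip Θ E (Fm.equal s r) ∧ (e = Fm.equal s r ∨ e = Fm.equal r s)

theorem flipToChain {Θ : Multiset (Fm L)} {X Z : Fm L} (fd : Flip Θ X Z) :
    ∃ eqs : Multiset (Fm L), (∀ e ∈ eqs, Mat Θ e) ∧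
      ∀ ⦃Φ : Multiset (Fm L)⦄, eqs ≤ Φ → Chain Φ X Z := by
  induction fd with
  | refl F => exact ⟨0, fun e he => absurd he (notMem_zero e), fun Φ _ => Chain.refl F⟩
  | @step X P v s₂ r₂ a b E₂ h₁ hP hs2 hr2 hab hE₂ hEf₂ ih₁ ih₂ =>
    obtain ⟨eqs₁, hmat₁, hch₁⟩ := ih₁
    refine ⟨Fm.equal a b ::ₘ eqs₁, ?_, ?_⟩
    · intro e he
      rcases mem_cons.mp he with rfl | he'
      · refine ⟨E₂, s₂, r₂, hE₂, hEf₂, ?_⟩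
        rcases hab with ⟨rfl, rfl⟩ | ⟨rfl, rfl⟩
        · exact Or.inl rfl
        · exact Or.inr rfl
      · exact hmat₁ e he'
    · intro Φ hle
      have hch := hch₁ (le_trans (le_cons_self _ _) hle)
      refine Chain.step hch hP ?_ ?_ (mem_of_le hle (mem_cons_self _ _))
      · rcases hab with ⟨rfl, rfl⟩ | ⟨rfl, rfl⟩
        · exact hs2
        · exact hr2
      · rcases hab with ⟨rfl, rfl⟩ | ⟨rfl, rfl⟩
        · exact hr2
        · exact hs2

theorem removeEqs {Θ : Multiset (Fm L)} (eqs : Multiset (Fm L)) (hmat : ∀ e ∈ eqs, Mat Θ e) :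
    ∀ ⦃Ξ : Multiset (Fm L)⦄ ⦃n : ℕ⦄, DerC (ReplMinus L) n (eqs + Θ) Ξ →
      ∃ m, DerC (ReplMinus L) m Θ Ξ := by
  induction eqs using Multiset.induction with
  | empty => exact fun Ξ n D => ⟨n, by rwa [zero_add] at D⟩
  | @cons e eqs ih =>
    intro Ξ n D
    rw [cons_add] at D
    obtain ⟨E, s, r, hE, hEf, hor⟩ := hmat e (mem_cons_self _ _)
    have hle : Θ ≤ eqs + Θ := le_add_left _ _
    have hrem := pasteEq hEf rfl hE hle
    have D' : ∃ m, DerC (ReplMinus L) m (eqs + Θ) Ξ := by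
      rcases hor with rfl | rfl
      · exact hrem.1 D
      · exact hrem.2 D
    obtain ⟨m, Dm⟩ := D'
    exact ih (fun e' he' => hmat e' (mem_cons_of_mem he')) Dm

/-- an axiom with the principal antecedent formula replaced by a Flip-relative -/
theorem axFlip {Θ' : Multiset (Fm L)} {X Z : Fm L} (hX : X ∈ Θ') (fd : Flip Θ' X Z)
    (hZ : Z.IsAtomic) (Δ : Multiset (Fm L)) :
    ∃ m, DerC (ReplMinus L) m Θ' (Z ::ₘ Δ) := by
  obtain ⟨eqs, hmat, hch⟩ := flipToChain fd
  have hch' : Chain (eqs + Θ'.erase X) X Z := hch (le_add_right _ _)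
  have D₀ : DerC (ReplMinus L) 0 (Z ::ₘ (eqs + Θ'.erase X)) (Z ::ₘ Δ) := DerC.ax hZ
  obtain ⟨m, Dm⟩ := hch'.conv D₀
  have hrw : X ::ₘ (eqs + Θ'.erase X) = eqs + Θ' := by
    conv_rhs => rw [← cons_erase hX, add_cons]
  rw [hrw] at Dm
  exact removeEqs eqs hmat Dm

end Aux7
section Aux8

open Multiset

/-- Covers: `Θ'` covers `Θ` if every occurrence in `Θ` is matched either bijectively (`mB`)
or contracted onto an existing member (`mC`), in both cases up to `Flip`. -/
def Cov (Θ' Θ : Multiset (Fm L)) : Prop :=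
  ∃ mB mC : Multiset (Fm L × Fm L),
    Θ = mB.map Prod.snd + mC.map Prod.snd ∧
    Θ' = mB.map Prod.fst ∧
    (∀ p ∈ mB, Flip Θ' p.1 p.2 ∧
      ∀ z ∈ (p.1 : Fm L).freeVars, z ∈ (p.2 : Fm L).freeVars ∨ z ∈ fvA Θ) ∧
    (∀ p ∈ mC, (p.1 : Fm L).IsAtomic ∧ p.1 ∈ Θ' ∧ Flip Θ' p.1 p.2)

theorem Cov.mem {Θ' Θ : Multiset (Fm L)} (cov : Cov Θ' Θ) {C : Fm L} (hC : C ∈ Θ) :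
    ∃ E ∈ Θ', Flip Θ' E C := by
  obtain ⟨mB, mC, hΘ, hΘ', hB, hC'⟩ := cov
  rw [hΘ] at hC
  rcases mem_add.mp hC with h | h
  · obtain ⟨p, hp, hpe⟩ := mem_map.mp h
    exact ⟨p.1, hΘ' ▸ mem_map_of_mem _ hp, hpe ▸ (hB p hp).1⟩
  · obtain ⟨p, hp, hpe⟩ := mem_map.mp h
    exact ⟨p.1, (hC' p hp).2.1, hpe ▸ (hC' p hp).2.2⟩

theorem Cov.fv {Θ' Θ : Multiset (Fm L)} (cov : Cov Θ' Θ) {y : ℕ}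
    (hy : ∀ C ∈ Θ, y ∉ C.freeVars) : ∀ C ∈ Θ', y ∉ C.freeVars := by
  obtain ⟨mB, mC, hΘ, hΘ', hB, hC'⟩ := cov
  intro C hC hyC
  rw [hΘ'] at hC
  obtain ⟨p, hp, hpe⟩ := mem_map.mp hC
  rcases (hB p hp).2 y (hpe ▸ hyC) with h | h
  · exact hy p.2 (hΘ ▸ mem_add.mpr (Or.inl (mem_map_of_mem _ hp))) h
  · obtain ⟨D, hD, -, hyD⟩ := h
    exact hy D hD hyD

theorem Cov.add {Θ' Θ : Multiset (Fm L)} (cov : Cov Θ' Θ) (C : Fm L) :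
    Cov (C ::ₘ Θ') (C ::ₘ Θ) := by
  obtain ⟨mB, mC, hΘ, hΘ', hB, hC'⟩ := cov
  refine ⟨(C, C) ::ₘ mB, mC, ?_, ?_, ?_, ?_⟩
  · rw [map_cons, cons_add, ← hΘ]
  · rw [map_cons, hΘ']
  · intro p hp
    rcases mem_cons.mp hp with rfl | hp'
    · exact ⟨Flip.refl C, fun z hz => Or.inl hz⟩
    · refine ⟨(hB p hp').1.mono (le_cons_self _ _), fun z hz => ?_⟩
      rcases (hB p hp').2 z hz with h | h
      · exact Or.inl h
      · exact Or.inr (fvA_cons_mono h)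
  · intro p hp
    exact ⟨(hC' p hp).1, mem_cons_of_mem (hC' p hp).2.1,
      (hC' p hp).2.2.mono (le_cons_self _ _)⟩

theorem Cov.drop {Θ' Γ₀ : Multiset (Fm L)} {G : Fm L} (hG : ¬ G.IsAtomic)
    (cov : Cov Θ' (G ::ₘ Γ₀)) :
    ∃ Rest : Multiset (Fm L), Θ' = G ::ₘ Rest ∧ Cov Rest Γ₀ := by
  obtain ⟨mB, mC, hΘ, hΘ', hB, hC'⟩ := cov
  -- locate the pair covering an occurrence of G; it must be an identity pair in mB
  have hGmem : G ∈ mB.map Prod.snd + mC.map Prod.snd := hΘ ▸ mem_cons_self _ _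
  have hpair : ∃ p ∈ mB, p.2 = G ∧ p.1 = G := by
    rcases mem_add.mp hGmem with h | h
    · obtain ⟨p, hp, hpe⟩ := mem_map.mp h
      refine ⟨p, hp, hpe, ?_⟩
      rcases (hB p hp).1.atomic_start with h' | h'
      · rw [h', hpe]
      · exact absurd (hpe ▸ (hB p hp).1.atomic_end h') hG
    · obtain ⟨p, hp, hpe⟩ := mem_map.mp h
      exact absurd (hpe ▸ (hC' p hp).2.2.atomic_end (hC' p hp).1) hG
  obtain ⟨p, hp, hp2, hp1⟩ := hpair
  have hBsnd : mB.map Prod.snd = G ::ₘ (mB.erase p).map Prod.snd := by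
    rw [map_erase_cons hp Prod.snd, hp2]
  have hBfst : mB.map Prod.fst = G ::ₘ (mB.erase p).map Prod.fst := by
    rw [map_erase_cons hp Prod.fst, hp1]
  have hΓ₀ : Γ₀ = (mB.erase p).map Prod.snd + mC.map Prod.snd := by
    have : G ::ₘ Γ₀ = G ::ₘ ((mB.erase p).map Prod.snd + mC.map Prod.snd) := by
      rw [← cons_add, ← hBsnd, ← hΘ]
    exact (cons_inj_right G).mp this
  have hfvA : ∀ z ∈ fvA (G ::ₘ Γ₀), z ∈ fvA Γ₀ := by
    intro z hz
    rcases mem_fvA_cons.mp hz with ⟨hGA, -⟩ | h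
    · exact absurd hGA hG
    · exact h
  have hRest : Θ' = G ::ₘ (mB.erase p).map Prod.fst := hΘ'.trans hBfst
  refine ⟨(mB.erase p).map Prod.fst, hRest, (mB.erase p), mC, hΓ₀, rfl, ?_, ?_⟩
  · intro q hq
    have hq' : q ∈ mB := mem_of_le (erase_le _ _) hq
    constructor
    · exact Flip.drop_nonatomic hG (hRest ▸ (hB q hq').1)
    · intro z hz
      rcases (hB q hq').2 z hz with h | h
      · exact Or.inl h
      · exact Or.inr (hfvA z h)
  · intro q hq
    have h1 := (hC' q hq).1
    have h2 := hRest ▸ (hC' q hq).2.1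
    have h3 := Flip.drop_nonatomic hG (hRest ▸ (hC' q hq).2.2)
    refine ⟨h1, ?_, h3⟩
    rcases mem_cons.mp h2 with he | hm
    · exact absurd (he ▸ h1) hG
    · exact hm

end Aux8
section Aux9

open Multiset

theorem master {n : ℕ} {Θ Δ : Multiset (Fm L)} (d : DerC (ReplMinus L) n Θ Δ) :
    ∀ ⦃Θ' : Multiset (Fm L)⦄, Cov Θ' Θ → ∃ m, DerC (ReplMinus L) m Θ' Δ := by
  induction d with
  | @ax n Γ₀ Δ₀ P hP =>
    intro Θ' cov
    obtain ⟨E, hE, hEf⟩ := cov.mem (mem_cons_self P Γ₀)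
    exact axFlip hE hEf hP Δ₀
  | @botL n Γ₀ Δ₀ =>
    intro Θ' cov
    obtain ⟨E, hE, hEf⟩ := cov.mem (mem_cons_self Fm.falsum Γ₀)
    have hEeq : E = Fm.falsum := hEf.eq_falsum
    subst hEeq
    exact ⟨0, by rw [← cons_erase hE]; exact DerC.botL⟩
  | @andL n Γ₀ Δ₀ A B h ih =>
    intro Θ' cov
    obtain ⟨Rest, hRest, cov'⟩ := cov.drop Fm.not_isAtomic_and
    obtain ⟨m, Dm⟩ := ih ((cov'.add B).add A)
    exact ⟨m + 1, by rw [hRest]; exact DerC.andL Dm⟩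
  | @andR n Γ₀ Δ₀ A B h₁ h₂ ih₁ ih₂ =>
    intro Θ' cov
    obtain ⟨m₁, D₁⟩ := ih₁ cov
    obtain ⟨m₂, D₂⟩ := ih₂ cov
    exact ⟨max m₁ m₂ + 1,
      DerC.andR (D₁.mono _ (le_max_left _ _)) (D₂.mono _ (le_max_right _ _))⟩
  | @orL n Γ₀ Δ₀ A B h₁ h₂ ih₁ ih₂ =>
    intro Θ' cov
    obtain ⟨Rest, hRest, cov'⟩ := cov.drop Fm.not_isAtomic_or
    obtain ⟨m₁, D₁⟩ := ih₁ (cov'.add A)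
    obtain ⟨m₂, D₂⟩ := ih₂ (cov'.add B)
    exact ⟨max m₁ m₂ + 1, by
      rw [hRest]
      exact DerC.orL (D₁.mono _ (le_max_left _ _)) (D₂.mono _ (le_max_right _ _))⟩
  | @orR n Γ₀ Δ₀ A B h ih =>
    intro Θ' cov
    obtain ⟨m, Dm⟩ := ih cov
    exact ⟨m + 1, DerC.orR Dm⟩
  | @impL n Γ₀ Δ₀ A B h₁ h₂ ih₁ ih₂ =>
    intro Θ' cov
    obtain ⟨Rest, hRest, cov'⟩ := cov.drop Fm.not_isAtomic_imp
    obtain ⟨m₁, D₁⟩ := ih₁ cov'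
    obtain ⟨m₂, D₂⟩ := ih₂ (cov'.add B)
    exact ⟨max m₁ m₂ + 1, by
      rw [hRest]
      exact DerC.impL (D₁.mono _ (le_max_left _ _)) (D₂.mono _ (le_max_right _ _))⟩
  | @impR n Γ₀ Δ₀ A B h ih =>
    intro Θ' cov
    obtain ⟨m, Dm⟩ := ih (cov.add A)
    exact ⟨m + 1, DerC.impR Dm⟩
  | @allL n Γ₀ Δ₀ x t A hf h ih =>
    intro Θ' cov
    obtain ⟨Rest, hRest, cov'⟩ := cov.drop Fm.not_isAtomic_all
    obtain ⟨m, Dm⟩ := ih (((cov'.add (Fm.all x A)).add (A.subst x t)))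
    exact ⟨m + 1, by rw [hRest]; exact DerC.allL hf Dm⟩
  | @allR n Γ₀ Δ₀ x y A hf hy hΓ hΔ h ih =>
    intro Θ' cov
    obtain ⟨m, Dm⟩ := ih cov
    exact ⟨m + 1, DerC.allR hf hy (cov.fv hΓ) hΔ Dm⟩
  | @exL n Γ₀ Δ₀ x y A hf hy hΓ hΔ h ih =>
    intro Θ' cov
    obtain ⟨Rest, hRest, cov'⟩ := cov.drop Fm.not_isAtomic_ex
    obtain ⟨m, Dm⟩ := ih (cov'.add (A.subst x (Term.var y)))
    have hall : ∀ C ∈ Fm.ex x A ::ₘ Γ₀, y ∉ C.freeVars := by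
      intro C hC
      rcases mem_cons.mp hC with rfl | hC'
      · exact hy
      · exact hΓ C hC'
    have hΓ' : ∀ C ∈ Rest, y ∉ C.freeVars := by
      intro C hC
      exact cov.fv hall C (hRest ▸ mem_cons_of_mem hC)
    exact ⟨m + 1, by rw [hRest]; exact DerC.exL hf hy hΓ' hΔ Dm⟩
  | @exR n Γ₀ Δ₀ x t A hf h ih =>
    intro Θ' cov
    obtain ⟨m, Dm⟩ := ih cov
    exact ⟨m + 1, DerC.exR hf Dm⟩
  | @ref n Γ₀ Δ₀ t h ih =>
    intro Θ' cov
    obtain ⟨m, Dm⟩ := ih (cov.add (Fm.equal t t))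
    exact ⟨m + 1, DerC.ref t Dm⟩
  | @repl n Γp Γc Δ₀ hrp h ih =>
    intro Θ' cov
    obtain ⟨s, r, v, P, Γ₁, hP, hs, hr, hΓp, hΓc⟩ := hrp
    subst hΓp
    subst hΓc
    have hjust := cov.mem (mem_cons_self (Fm.equal s r) _)
    obtain ⟨E, hEmem, hEf⟩ := hjust
    obtain ⟨mB, mC, hΘ, hΘ', hB, hC'⟩ := cov
    have hfva2 : ∀ z, z ∈ fvA (Fm.equal s r ::ₘ P.subst v s ::ₘ Γ₁) →
        z ∈ fvA (Fm.equal s r ::ₘ P.subst v r ::ₘ Γ₁) := fun z hz => fvA_repl hP hz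
    have hPsmem : P.subst v s ∈ mB.map Prod.snd + mC.map Prod.snd :=
      hΘ ▸ mem_cons_of_mem (mem_cons_self _ _)
    -- the new-pair clause, used in both subcases
    have hclause : ∀ {X : Fm L}, (∀ z ∈ X.freeVars,
          z ∈ (P.subst v s).freeVars ∨ z ∈ fvA (Fm.equal s r ::ₘ P.subst v s ::ₘ Γ₁)) →
        ∀ z ∈ X.freeVars,
          z ∈ (P.subst v r).freeVars ∨ z ∈ fvA (Fm.equal s r ::ₘ P.subst v r ::ₘ Γ₁) := by
      intro X hX z hz
      rcases hX z hz with h' | h'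
      · rcases Fm.mem_freeVars_subst_cases hP (a := r) h' with h'' | h''
        · exact Or.inl h''
        · exact Or.inr ⟨Fm.equal s r, mem_cons_self _ _, Fm.IsAtomic.equal _ _,
            Fm.mem_freeVars_equal.mpr (Or.inl h'')⟩
      · exact Or.inr (hfva2 z h')
    rcases mem_add.mp hPsmem with hBs | hCs
    · -- the occurrence of P[v/s] is covered bijectively
      obtain ⟨p, hp, hpe⟩ := mem_map.mp hBs
      have hkey : Fm.equal s r ::ₘ Γ₁ = (mB.erase p).map Prod.snd + mC.map Prod.snd := by
        have h1 : mB.map Prod.snd = P.subst v s ::ₘ (mB.erase p).map Prod.snd := by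
          rw [map_erase_cons hp Prod.snd, hpe]
        have h2 : P.subst v s ::ₘ (Fm.equal s r ::ₘ Γ₁) =
            P.subst v s ::ₘ ((mB.erase p).map Prod.snd + mC.map Prod.snd) := by
          rw [← cons_add, ← h1, ← hΘ, cons_swap]
        exact (cons_inj_right _).mp h2
      refine ih (Θ' := Θ') ⟨(p.1, P.subst v r) ::ₘ mB.erase p, mC, ?_, ?_, ?_, ?_⟩
      · rw [map_cons, cons_add, ← hkey, cons_swap]
      · rw [map_cons]
        have : mB.map Prod.fst = p.1 ::ₘ (mB.erase p).map Prod.fst :=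
          map_erase_cons hp Prod.fst
        rw [hΘ', this]
      · intro q hq
        rcases mem_cons.mp hq with rfl | hq'
        · constructor
          · exact Flip.step E (hpe ▸ (hB p hp).1) hP hs hr (Or.inl ⟨rfl, rfl⟩) hEmem hEf
          · exact hclause (fun z hz => hpe ▸ (hB p hp).2 z hz)
        · have hq'' : q ∈ mB := mem_of_le (erase_le _ _) hq'
          exact ⟨(hB q hq'').1, fun z hz => by
            rcases (hB q hq'').2 z hz with h' | h'
            · exact Or.inl h'
            · exact Or.inr (hfva2 z h')⟩
      · intro q hq
        exact ⟨(hC' q hq).1, (hC' q hq).2.1, (hC' q hq).2.2⟩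
    · -- the occurrence of P[v/s] is covered by contraction
      obtain ⟨p, hp, hpe⟩ := mem_map.mp hCs
      have hkey : Fm.equal s r ::ₘ Γ₁ = mB.map Prod.snd + (mC.erase p).map Prod.snd := by
        have h1 : mC.map Prod.snd = P.subst v s ::ₘ (mC.erase p).map Prod.snd := by
          rw [map_erase_cons hp Prod.snd, hpe]
        have h2 : P.subst v s ::ₘ (Fm.equal s r ::ₘ Γ₁) =
            P.subst v s ::ₘ (mB.map Prod.snd + (mC.erase p).map Prod.snd) := by
          rw [← add_cons, ← h1, ← hΘ, cons_swap]
        exact (cons_inj_right _).mp h2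
      refine ih (Θ' := Θ') ⟨mB, (p.1, P.subst v r) ::ₘ mC.erase p, ?_, hΘ', ?_, ?_⟩
      · rw [map_cons, add_cons, ← hkey, cons_swap]
      · intro q hq
        exact ⟨(hB q hq).1, fun z hz => by
          rcases (hB q hq).2 z hz with h' | h'
          · exact Or.inl h'
          · exact Or.inr (hfva2 z h')⟩
      · intro q hq
        rcases mem_cons.mp hq with rfl | hq'
        · exact ⟨(hC' p hp).1, (hC' p hp).2.1,
            Flip.step E (hpe ▸ (hC' p hp).2.2) hP hs hr (Or.inl ⟨rfl, rfl⟩) hEmem hEf⟩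
        · have hq'' : q ∈ mC := mem_of_le (erase_le _ _) hq'
          exact ⟨(hC' q hq'').1, (hC' q hq'').2.1, (hC' q hq'').2.2⟩

end Aux9

open Multiset in
/-- The rule Repl is admissible in `G3c^=⁻`: for atomic `P` and `v` not occurring in
`s`, `r`, if `s = r, P[v/s], P[v/r], Γ ⇒ Δ` is derivable then so is
`s = r, P[v/s], Γ ⇒ Δ`. -/
theorem repl_admissible_G3cEqMinus (L : FirstOrder.Language.{u, v})
    (P : Fm L) (hP : P.IsAtomic) (v : ℕ)
    (s r : L.Term ℕ) (hs : tCount v s = 0) (hr : tCount v r = 0)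
    (Γ Δ : Multiset (Fm L))
    (hd : ∃ n, DerC (ReplMinus L) n
      (Fm.equal s r ::ₘ P.subst v s ::ₘ P.subst v r ::ₘ Γ) Δ) :
    ∃ n, DerC (ReplMinus L) n (Fm.equal s r ::ₘ P.subst v s ::ₘ Γ) Δ := by
  obtain ⟨n, d⟩ := hd
  set Θ' : Multiset (Fm L) := Fm.equal s r ::ₘ P.subst v s ::ₘ Γ with hΘ'def
  have hflip : Flip Θ' (P.subst v s) (P.subst v r) :=
    Flip.step (Fm.equal s r) (Flip.refl (P.subst v s)) hP hs hr (Or.inl ⟨rfl, rfl⟩)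
      (mem_cons_self _ _) (Flip.refl (Fm.equal s r))
  have cov : Cov Θ' (Fm.equal s r ::ₘ P.subst v s ::ₘ P.subst v r ::ₘ Γ) := by
    refine ⟨(Fm.equal s r, Fm.equal s r) ::ₘ (P.subst v s, P.subst v s) ::ₘ
      Γ.map (fun C => (C, C)), {(P.subst v s, P.subst v r)}, ?_, ?_, ?_, ?_⟩
    · simp only [map_cons, map_singleton, Multiset.map_map]
      rw [show (Prod.snd ∘ fun C : Fm L => (C, C)) = id from rfl, Multiset.map_id]
      rw [show ({P.subst v r} : Multiset (Fm L)) = P.subst v r ::ₘ 0 from rfl]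
      rw [add_cons, add_zero, cons_swap (P.subst v r), cons_swap (P.subst v r) (P.subst v s)]
    · simp only [map_cons, Multiset.map_map]
      rw [show (Prod.fst ∘ fun C : Fm L => (C, C)) = id from rfl, Multiset.map_id]
    · intro p hp
      have hdiag : p.1 = p.2 := by
        rcases mem_cons.mp hp with rfl | hp'
        · rfl
        · rcases mem_cons.mp hp' with rfl | hp''
          · rfl
          · obtain ⟨C, -, hc⟩ := mem_map.mp hp''
            rw [← hc]
      refine ⟨?_, fun z hz => Or.inl (hdiag ▸ hz)⟩
      rw [← hdiag]
      exact Flip.refl _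
    · intro p hp
      rw [mem_singleton.mp hp]
      exact ⟨hP.subst v s, mem_cons_of_mem (mem_cons_self _ _), hflip⟩
  exact master d cov
end Aux5
end
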